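/- arXiv:2503.19154 — 7 statements merged into one kernel-verified Lean document; each statement's English description precedes it below -/
import Mathlib

section
/- Let c : [0,∞) → ℝ be a continuous, positive and non-decreasing function, and let ψ : [0,∞) → ℝ be twice differentiable with ψ''(θ) = c(θ)·ψ(θ) for all θ > 0, ψ(0) = 0 and ψ'(0) = 1. Then for every θ ≥ 0 one has ψ(θ) ≤ θ·exp(∫₀^θ √(c(t)) dt). -/
open Real Filter Set MeasureTheory Topology

/-- Lemma 2.5 (upper bound): if `c` is continuous, positive and non-decreasing on `[0,∞)`
and `ψ` solves `ψ'' = c ψ`, `ψ(0) = 0`, `ψ'(0) = 1`, then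
`ψ(θ) ≤ θ · exp(∫₀^θ √(c t) dt)` for all `θ ≥ 0`. -/
theorem stmt0 (c ψ ψ' : ℝ → ℝ)
    (hc_cont : ContinuousOn c (Set.Ici 0))
    (hc_pos : ∀ θ ≥ (0:ℝ), 0 < c θ)
    (hc_mono : MonotoneOn c (Set.Ici 0))
    (hψ : ∀ θ ≥ (0:ℝ), HasDerivAt ψ (ψ' θ) θ)
    (hψ'' : ∀ θ > (0:ℝ), HasDerivAt ψ' (c θ * ψ θ) θ)
    (hψ0 : ψ 0 = 0) (hψ'0 : ψ' 0 = 1) :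
    ∀ θ ≥ (0:ℝ), ψ θ ≤ θ * Real.exp (∫ t in (0:ℝ)..θ, Real.sqrt (c t)) := by
  have hψca : ∀ x ≥ (0:ℝ), ContinuousAt ψ x := fun x hx => (hψ x hx).continuousAt
  have hψcont : ContinuousOn ψ (Ici 0) := fun x hx => (hψca x hx).continuousWithinAt
  have hψ'ca : ∀ x > (0:ℝ), ContinuousAt ψ' x := fun x hx => (hψ'' x hx).continuousAt
  have hψ'cont : ContinuousOn ψ' (Ioi 0) := fun x hx => (hψ'ca x hx).continuousWithinAt
  have hcψcont : ContinuousOn (fun t => c t * ψ t) (Ici 0) := hc_cont.mul hψcont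
  -- FTC for ψ on [a,b] ⊆ (0,∞)
  have hFTCψ : ∀ a b : ℝ, 0 < a → a ≤ b → ψ b - ψ a = ∫ t in a..b, ψ' t := by
    intro a b ha hab
    refine (intervalIntegral.integral_eq_sub_of_hasDerivAt ?_ ?_).symm
    · intro x hx
      rw [uIcc_of_le hab] at hx
      exact hψ x (ha.le.trans hx.1)
    · apply ContinuousOn.intervalIntegrable
      apply hψ'cont.mono
      rw [uIcc_of_le hab]
      exact fun x hx => lt_of_lt_of_le ha hx.1
  -- FTC for ψ' on [a,b] ⊆ (0,∞)
  have hFTCψ' : ∀ a b : ℝ, 0 < a → a ≤ b → ψ' b - ψ' a = ∫ t in a..b, c t * ψ t := by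
    intro a b ha hab
    refine (intervalIntegral.integral_eq_sub_of_hasDerivAt ?_ ?_).symm
    · intro x hx
      rw [uIcc_of_le hab] at hx
      exact hψ'' x (lt_of_lt_of_le ha hx.1)
    · apply ContinuousOn.intervalIntegrable
      apply hcψcont.mono
      rw [uIcc_of_le hab]
      exact fun x hx => (ha.le.trans hx.1 : (0:ℝ) ≤ x)
  -- slope at 0 tends to 1
  have hslope : Tendsto (fun s => ψ s / s) (𝓝[>] (0:ℝ)) (𝓝 1) := by
    have h0 : HasDerivAt ψ 1 0 := hψ'0 ▸ hψ 0 le_rfl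
    have := hasDerivAt_iff_tendsto_slope.mp h0
    have h2 : Tendsto (slope ψ 0) (𝓝[>] (0:ℝ)) (𝓝 1) :=
      this.mono_left (nhdsWithin_mono 0 (fun x hx => ne_of_gt hx))
    refine h2.congr (fun x => ?_)
    simp [slope, hψ0]
    ring
  -- near 0, ψ s > s / 2
  have hδ : ∃ δ > (0:ℝ), ∀ s, 0 < s → s < δ → s / 2 < ψ s := by
    have hev : ∀ᶠ s in 𝓝[>] (0:ℝ), (1:ℝ)/2 < ψ s / s :=
      hslope.eventually (eventually_gt_nhds (by norm_num))
    rw [eventually_nhdsWithin_iff] at hev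
    rcases Metric.eventually_nhds_iff.mp hev with ⟨δ, hδpos, hδ⟩
    refine ⟨δ, hδpos, fun s hs1 hs2 => ?_⟩
    have := hδ (by rw [Real.dist_eq]; rw [sub_zero]; rw [abs_of_pos hs1]; exact hs2) hs1
    rw [lt_div_iff₀ hs1] at this
    linarith
  obtain ⟨δ, hδpos, hδ⟩ := hδ
  -- arbitrarily close to 0 there are points with ψ' ≥ 1/2
  have hξ : ∀ ε > (0:ℝ), ∃ ξ, 0 < ξ ∧ ξ < ε ∧ 1/2 ≤ ψ' ξ := by
    intro ε hε
    set s := min ε δ / 2 with hs_def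
    have hs0 : 0 < s := by positivity
    have hmin : 0 < min ε δ := lt_min hε hδpos
    have hsδ : s < δ := by
      have := min_le_right ε δ; rw [hs_def]; linarith
    have hsε : s < ε := by
      have := min_le_left ε δ; rw [hs_def]; linarith
    obtain ⟨ξ, hξmem, hξeq⟩ := exists_hasDerivAt_eq_slope ψ ψ' hs0
      (hψcont.mono (fun x hx => hx.1)) (fun x hx => hψ x hx.1.le)
    refine ⟨ξ, hξmem.1, hξmem.2.trans hsε, ?_⟩
    rw [hξeq, hψ0, sub_zero, sub_zero, le_div_iff₀ hs0]
    have := hδ s hs0 hsδ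
    linarith
  -- main positivity claim: ψ > 0 and ψ' ≥ 1/2 on (0,∞)
  have hB : ¬ ({t : ℝ | 0 < t ∧ ¬ (0 < ψ t ∧ 1/2 ≤ ψ' t)}).Nonempty := by
    intro hne
    set B := {t : ℝ | 0 < t ∧ ¬ (0 < ψ t ∧ 1/2 ≤ ψ' t)} with hB_def
    have hbdd : BddBelow B := ⟨0, fun x hx => hx.1.le⟩
    set t₀ := sInf B with ht₀_def
    -- points in (0, δ) are good
    have hgood_small : ∀ t, 0 < t → t < δ → 0 < ψ t ∧ 1/2 ≤ ψ' t := by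
      intro t ht htδ
      obtain ⟨ξ, hξ0, hξt, hξhalf⟩ := hξ t ht
      have hψt : 0 < ψ t := lt_trans (by linarith) (hδ t ht htδ)
      refine ⟨hψt, ?_⟩
      have hint : ψ' t - ψ' ξ = ∫ u in ξ..t, c u * ψ u := hFTCψ' ξ t hξ0 hξt.le
      have hnn : 0 ≤ ∫ u in ξ..t, c u * ψ u := by
        apply intervalIntegral.integral_nonneg hξt.le
        intro u hu
        have hu0 : 0 < u := lt_of_lt_of_le hξ0 hu.1
        have huδ : u < δ := lt_of_le_of_lt hu.2 htδ
        exact le_of_lt (mul_pos (hc_pos u hu0.le) (lt_trans (by linarith) (hδ u hu0 huδ)))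
      linarith
    have ht₀δ : δ ≤ t₀ := by
      apply le_csInf hne
      intro b hb
      by_contra hlt
      push_neg at hlt
      exact hb.2 (hgood_small b hb.1 hlt)
    have ht₀pos : 0 < t₀ := lt_of_lt_of_le hδpos ht₀δ
    have hgood_lt : ∀ t, 0 < t → t < t₀ → 0 < ψ t ∧ 1/2 ≤ ψ' t := by
      intro t h1 h2
      by_contra h
      exact absurd (csInf_le hbdd ⟨h1, h⟩) (not_le.2 h2)
    set s := t₀ / 2 with hs_def
    have hs0 : 0 < s := by positivity
    have hst₀ : s < t₀ := by rw [hs_def]; linarith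
    obtain ⟨hψs, hψ's⟩ := hgood_lt s hs0 hst₀
    -- ψ t₀ ≥ 0 by continuity from the left
    have hψt₀nn : 0 ≤ ψ t₀ := by
      have htend : Tendsto ψ (𝓝[<] t₀) (𝓝 (ψ t₀)) :=
        ((hψca t₀ ht₀pos.le).tendsto).mono_left nhdsWithin_le_nhds
      refine ge_of_tendsto htend ?_
      filter_upwards [Ioo_mem_nhdsLT hst₀] with x hx
      exact (hgood_lt x (lt_trans hs0 hx.1) hx.2).1.le
    have hψnnIcc : ∀ u ∈ Icc s t₀, 0 ≤ ψ u := by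
      intro u hu
      rcases eq_or_lt_of_le hu.2 with h | h
      · rw [h]; exact hψt₀nn
      · exact (hgood_lt u (lt_of_lt_of_le hs0 hu.1) h).1.le
    -- ψ'(t₀) > 1/2
    have hintpos : 0 < ∫ u in s..t₀, c u * ψ u := by
      apply intervalIntegral.intervalIntegral_pos_of_pos_on
      · apply ContinuousOn.intervalIntegrable
        apply hcψcont.mono
        rw [uIcc_of_le hst₀.le]
        exact fun x hx => (hs0.le.trans hx.1 : (0:ℝ) ≤ x)
      · intro x hx
        exact mul_pos (hc_pos x (hs0.le.trans hx.1.le))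
          (hgood_lt x (lt_trans hs0 hx.1) hx.2).1
      · exact hst₀
    have hψ't₀ : 1/2 < ψ' t₀ := by
      have := hFTCψ' s t₀ hs0 hst₀.le
      linarith
    -- ψ(t₀) > 0
    have hψt₀pos : 0 < ψ t₀ := by
      have hFT := hFTCψ s t₀ hs0 hst₀.le
      have hnn : 0 ≤ ∫ u in s..t₀, ψ' u := by
        apply intervalIntegral.integral_nonneg hst₀.le
        intro u hu
        rcases eq_or_lt_of_le hu.2 with h | h
        · rw [h]; linarith
        · linarith [(hgood_lt u (lt_of_lt_of_le hs0 hu.1) h).2]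
      linarith
    -- a neighborhood of t₀ is good
    have hev : ∀ᶠ x in 𝓝 t₀, 0 < ψ x ∧ 1/2 < ψ' x := by
      have h1 : ∀ᶠ x in 𝓝 t₀, 0 < ψ x :=
        (hψca t₀ ht₀pos.le).tendsto.eventually (eventually_gt_nhds hψt₀pos)
      have h2 : ∀ᶠ x in 𝓝 t₀, 1/2 < ψ' x :=
        (hψ'ca t₀ ht₀pos).tendsto.eventually (eventually_gt_nhds hψ't₀)
      exact h1.and h2
    rcases Metric.eventually_nhds_iff.mp hev with ⟨η, hηpos, hη⟩
    have hlb : ∀ b ∈ B, t₀ + η ≤ b := by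
      intro b hb
      by_contra hlt
      push_neg at hlt
      have hb₀ : t₀ ≤ b := csInf_le hbdd hb
      have : dist b t₀ < η := by
        rw [Real.dist_eq, abs_of_nonneg (by linarith)]
        linarith
      obtain ⟨hg1, hg2⟩ := hη this
      exact hb.2 ⟨hg1, hg2.le⟩
    have : t₀ + η ≤ t₀ := le_csInf hne hlb
    linarith
  have hgood : ∀ t > (0:ℝ), 0 < ψ t ∧ 1/2 ≤ ψ' t := by
    intro t ht
    by_contra h
    exact hB ⟨t, ht, h⟩
  -- key differential inequality: ψ'(θ) ≤ (1/θ + √c(θ)) ψ(θ)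
  have key : ∀ θ > (0:ℝ), ψ' θ ≤ (1/θ + Real.sqrt (c θ)) * ψ θ := by
    intro θ hθ
    obtain ⟨s, hsmem, hseq⟩ := exists_hasDerivAt_eq_slope ψ ψ' hθ
      (hψcont.mono (fun x hx => hx.1)) (fun x hx => hψ x hx.1.le)
    rw [hψ0, sub_zero, sub_zero] at hseq
    have hs0 : 0 < s := hsmem.1
    have hsθ : s < θ := hsmem.2
    have hsub : Icc s θ ⊆ Ioi 0 := fun x hx => lt_of_lt_of_le hs0 hx.1
    -- FTC for ψ'^2
    have hsq1 : ψ' θ * ψ' θ - ψ' s * ψ' s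
        = ∫ t in s..θ, ((c t * ψ t) * ψ' t + ψ' t * (c t * ψ t)) := by
      refine (intervalIntegral.integral_eq_sub_of_hasDerivAt
        (f := fun t => ψ' t * ψ' t) ?_ ?_).symm
      · intro x hx
        rw [uIcc_of_le hsθ.le] at hx
        exact (hψ'' x (hsub hx)).mul (hψ'' x (hsub hx))
      · apply ContinuousOn.intervalIntegrable
        rw [uIcc_of_le hsθ.le]
        have h1 : ContinuousOn (fun t => c t * ψ t) (Icc s θ) :=
          hcψcont.mono (fun x hx => (show (0:ℝ) ≤ x from (hsub hx).le))
        have h2 : ContinuousOn ψ' (Icc s θ) := hψ'cont.mono hsub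
        exact (h1.mul h2).add (h2.mul h1)
    -- FTC for ψ^2
    have hsq2 : ψ θ * ψ θ - ψ s * ψ s = ∫ t in s..θ, (ψ' t * ψ t + ψ t * ψ' t) := by
      refine (intervalIntegral.integral_eq_sub_of_hasDerivAt
        (f := fun t => ψ t * ψ t) ?_ ?_).symm
      · intro x hx
        rw [uIcc_of_le hsθ.le] at hx
        exact (hψ x (hsub hx).le).mul (hψ x (hsub hx).le)
      · apply ContinuousOn.intervalIntegrable
        rw [uIcc_of_le hsθ.le]
        have h1 : ContinuousOn ψ (Icc s θ) := hψcont.mono (fun x hx => (show (0:ℝ) ≤ x from (hsub hx).le))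
        have h2 : ContinuousOn ψ' (Icc s θ) := hψ'cont.mono hsub
        exact (h2.mul h1).add (h1.mul h2)
    -- comparison of integrands
    have hmono : (∫ t in s..θ, ((c t * ψ t) * ψ' t + ψ' t * (c t * ψ t)))
        ≤ ∫ t in s..θ, c θ * (ψ' t * ψ t + ψ t * ψ' t) := by
      apply intervalIntegral.integral_mono_on hsθ.le
      · apply ContinuousOn.intervalIntegrable
        rw [uIcc_of_le hsθ.le]
        have h1 : ContinuousOn (fun t => c t * ψ t) (Icc s θ) :=
          hcψcont.mono (fun x hx => (show (0:ℝ) ≤ x from (hsub hx).le))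
        have h2 : ContinuousOn ψ' (Icc s θ) := hψ'cont.mono hsub
        exact (h1.mul h2).add (h2.mul h1)
      · apply ContinuousOn.intervalIntegrable
        rw [uIcc_of_le hsθ.le]
        have h1 : ContinuousOn ψ (Icc s θ) := hψcont.mono (fun x hx => (show (0:ℝ) ≤ x from (hsub hx).le))
        have h2 : ContinuousOn ψ' (Icc s θ) := hψ'cont.mono hsub
        exact (continuousOn_const.mul ((h2.mul h1).add (h1.mul h2)))
      · intro t ht
        have ht0 : 0 < t := hsub ht
        have hct : c t ≤ c θ := hc_mono (le_of_lt ht0) hθ.le ht.2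
        have hψt : 0 < ψ t := (hgood t ht0).1
        have hψ't : 0 ≤ ψ' t := by linarith [(hgood t ht0).2]
        have hc0 : 0 < c t := hc_pos t ht0.le
        nlinarith [mul_nonneg hψt.le hψ't]
    rw [intervalIntegral.integral_const_mul, ← hsq2, ← hsq1] at hmono
    -- now hmono : ψ'θ² - ψ's² ≤ cθ (ψθ² - ψs²)
    have hq : Real.sqrt (c θ) * Real.sqrt (c θ) = c θ :=
      Real.mul_self_sqrt (hc_pos θ hθ.le).le
    have hψθ : 0 < ψ θ := (hgood θ hθ).1
    have hψ'θ : 0 ≤ ψ' θ := by linarith [(hgood θ hθ).2]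
    have hψ's : 0 ≤ ψ' s := by linarith [(hgood s hs0).2]
    have hψs : 0 < ψ s := (hgood s hs0).1
    have hqψ : 0 ≤ Real.sqrt (c θ) * ψ θ := mul_nonneg (Real.sqrt_nonneg _) hψθ.le
    have hcθ : 0 < c θ := hc_pos θ hθ.le
    have h2 : ψ' θ ≤ ψ' s + Real.sqrt (c θ) * ψ θ := by
      nlinarith [mul_nonneg hψ's hqψ, sq_nonneg (ψ s)]
    rw [hseq] at h2
    have : ψ θ / θ = (1/θ) * ψ θ := by ring
    rw [this] at h2
    linarith [add_mul (1/θ) (Real.sqrt (c θ)) (ψ θ)]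
  -- the comparison function
  have hsqc_cont : ContinuousOn (fun t => Real.sqrt (c t)) (Ici 0) :=
    Real.continuous_sqrt.comp_continuousOn hc_cont
  set G : ℝ → ℝ := fun x => ∫ t in (0:ℝ)..x, Real.sqrt (c t) with hG_def
  have hGint : ∀ x : ℝ, 0 ≤ x → IntervalIntegrable (fun t => Real.sqrt (c t)) volume 0 x := by
    intro x hx
    apply ContinuousOn.intervalIntegrable
    apply hsqc_cont.mono
    rw [uIcc_of_le hx]
    exact fun u hu => hu.1
  have hG' : ∀ x > (0:ℝ), HasDerivAt G (Real.sqrt (c x)) x := by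
    intro x hx
    refine intervalIntegral.integral_hasDerivAt_right (hGint x hx.le) ?_ ?_
    · exact ContinuousOn.stronglyMeasurableAtFilter isOpen_Ioi
        (hsqc_cont.mono (fun u hu => hu.le)) x hx
    · exact (hsqc_cont x hx.le).continuousAt (Ici_mem_nhds hx)
  set F : ℝ → ℝ := fun x => Real.log (ψ x) - Real.log x - G x with hF_def
  have hF' : ∀ x ∈ Ioi (0:ℝ), HasDerivAt F (ψ' x / ψ x - x⁻¹ - Real.sqrt (c x)) x := by
    intro x hx
    exact (((hψ x (le_of_lt hx)).log (ne_of_gt (hgood x hx).1)).sub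
      (Real.hasDerivAt_log (ne_of_gt hx))).sub (hG' x hx)
  have hanti : AntitoneOn F (Ioi 0) := by
    apply antitoneOn_of_deriv_nonpos (convex_Ioi 0)
    · exact fun x hx => ((hF' x hx).continuousAt).continuousWithinAt
    · intro x hx
      rw [interior_Ioi] at hx
      exact ((hF' x hx).differentiableAt).differentiableWithinAt
    · intro x hx
      rw [interior_Ioi] at hx
      rw [(hF' x hx).deriv]
      have hdiv : ψ' x / ψ x ≤ 1/x + Real.sqrt (c x) :=
        (div_le_iff₀ (hgood x hx).1).mpr (key x hx)
      have : (1:ℝ)/x = x⁻¹ := one_div x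
      linarith
  -- F tends to 0 at 0⁺
  have hT2 : Tendsto G (𝓝[>] (0:ℝ)) (𝓝 0) := by
    have hub : ∀ x, 0 < x → x ≤ 1 → G x ≤ x * Real.sqrt (c 1) := by
      intro x hx hx1
      have : G x ≤ ∫ t in (0:ℝ)..x, Real.sqrt (c 1) := by
        apply intervalIntegral.integral_mono_on hx.le (hGint x hx.le)
          intervalIntegrable_const
        intro t ht
        exact Real.sqrt_le_sqrt (hc_mono ht.1 (Set.mem_Ici.mpr zero_le_one) (ht.2.trans hx1))
      simpa using this
    have hlb : ∀ x, 0 < x → 0 ≤ G x := by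
      intro x hx
      exact intervalIntegral.integral_nonneg hx.le (fun u hu => Real.sqrt_nonneg _)
    have htend : Tendsto (fun x : ℝ => x * Real.sqrt (c 1)) (𝓝[>] (0:ℝ)) (𝓝 0) := by
      have := (tendsto_id.mono_left (nhdsWithin_le_nhds : 𝓝[>] (0:ℝ) ≤ 𝓝 0)).mul_const
        (Real.sqrt (c 1))
      simpa using this
    apply squeeze_zero' ?_ ?_ htend
    · filter_upwards [self_mem_nhdsWithin] with x hx using hlb x hx
    · filter_upwards [Ioo_mem_nhdsGT (by norm_num : (0:ℝ) < 1)]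
        with x hx using hub x hx.1 hx.2.le
  have hT1 : Tendsto (fun x => Real.log (ψ x / x)) (𝓝[>] (0:ℝ)) (𝓝 0) := by
    have := (Real.continuousAt_log (one_ne_zero)).tendsto.comp hslope
    rw [Real.log_one] at this
    exact this
  have hFlim : Tendsto F (𝓝[>] (0:ℝ)) (𝓝 0) := by
    have := hT1.sub hT2
    rw [sub_zero] at this
    apply this.congr'
    filter_upwards [self_mem_nhdsWithin] with x hx
    rw [hF_def]
    simp only
    rw [Real.log_div (ne_of_gt (hgood x hx).1) (ne_of_gt hx)]
  -- conclusion
  intro θ hθ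
  rcases eq_or_lt_of_le hθ with h | hθpos
  · rw [← h, hψ0]; simp
  · have hFθ : F θ ≤ 0 := by
      refine ge_of_tendsto hFlim ?_
      filter_upwards [Ioo_mem_nhdsGT hθpos] with x hx
      exact hanti hx.1 hθpos hx.2.le
    have hlog : Real.log (ψ θ) ≤ Real.log (θ * Real.exp (G θ)) := by
      rw [Real.log_mul (ne_of_gt hθpos) (Real.exp_ne_zero _), Real.log_exp]
      have : F θ = Real.log (ψ θ) - Real.log θ - G θ := rfl
      linarith
    show ψ θ ≤ θ * Real.exp (G θ)
    exact (Real.log_le_log_iff (hgood θ hθpos).1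
      (mul_pos hθpos (Real.exp_pos _))).mp hlog
end

section
/- Let d ≥ 2 be an integer, 0 < q < 1, c > 0, and λ > (d−1)(1−q)/q, and set p = (d−1)(1−q)/(λq) ∈ (0,1). There exists a constant C > 0, depending only on λ, q, c and d, such that for all Borel measurable functions f, g : ℝ^d → [0,∞] with g(x) ≤ (sinh(√c·‖x‖)/(√c·‖x‖))^{d−1} for almost every x ≠ 0, one has ∫_{ℝ^d} f(x)^q g(x) dx ≤ C · (∫_{ℝ^d} f(x) g(x) dx)^{(1−p)q} · (∫_{ℝ^d} (sinh(√c·‖x‖)/√c)^λ f(x) g(x) dx)^{pq}, where all integrals are with respect to Lebesgue measure on ℝ^d and take values in [0,∞]. -/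
open Real Filter Set MeasureTheory
open scoped ENNReal
open Topology

lemma lintegral_norm_polar {E : Type*} [NormedAddCommGroup E] [NormedSpace ℝ E]
    [MeasurableSpace E] [BorelSpace E] [FiniteDimensional ℝ E] [Nontrivial E]
    (μ : Measure E) [μ.IsAddHaarMeasure] (F : ℝ → ℝ≥0∞) (hF : Measurable F) :
    ∫⁻ x, F ‖x‖ ∂μ
      = μ.toSphere univ *
        ∫⁻ r in Ioi (0:ℝ), ENNReal.ofReal (r ^ (Module.finrank ℝ E - 1)) * F r := by
  have h1 : ∫⁻ x, F ‖x‖ ∂μ = ∫⁻ x : ({0}ᶜ : Set E), F ‖x.1‖ ∂(μ.comap (↑)) := by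
    rw [lintegral_subtype_comap (measurableSet_singleton (0:E)).compl fun x => F ‖x‖,
      MeasureTheory.restrict_compl_singleton]
  rw [h1]
  have hmeas : Measurable fun (y : Metric.sphere (0:E) 1 × Ioi (0:ℝ)) => F y.2.1 :=
    hF.comp (measurable_subtype_coe.comp measurable_snd)
  have h2 := (μ.measurePreserving_homeomorphUnitSphereProd).lintegral_comp
    (f := fun (y : Metric.sphere (0:E) 1 × Ioi (0:ℝ)) => F y.2.1) hmeas
  calc ∫⁻ x : ({0}ᶜ : Set E), F ‖x.1‖ ∂(μ.comap (↑))
      = ∫⁻ x : ({0}ᶜ : Set E), F ((homeomorphUnitSphereProd E x).2 : ℝ) ∂(μ.comap (↑)) := by simp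
    _ = ∫⁻ y : Metric.sphere (0:E) 1 × Ioi (0:ℝ), F y.2.1
          ∂(μ.toSphere.prod (.volumeIoiPow (Module.finrank ℝ E - 1))) := h2
    _ = μ.toSphere univ *
        ∫⁻ r : Ioi (0:ℝ), F r ∂(Measure.volumeIoiPow (Module.finrank ℝ E - 1)) := by
        rw [MeasureTheory.lintegral_prod _ hmeas.aemeasurable]
        simp [lintegral_const, mul_comm]
    _ = μ.toSphere univ *
        ∫⁻ r in Ioi (0:ℝ), ENNReal.ofReal (r ^ (Module.finrank ℝ E - 1)) * F r := by
        congr 1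
        set n := Module.finrank ℝ E - 1 with hn
        have hdens : Measurable fun r : Ioi (0:ℝ) => ENNReal.ofReal (r.1 ^ n) :=
          (measurable_subtype_coe.pow_const _).ennreal_ofReal
        have hF' : Measurable fun r : Ioi (0:ℝ) => F r := hF.comp measurable_subtype_coe
        calc (∫⁻ r : Ioi (0:ℝ), F r ∂(Measure.volumeIoiPow n))
            = ∫⁻ r : Ioi (0:ℝ),
                ((fun r : Ioi (0:ℝ) => ENNReal.ofReal (r.1 ^ n)) * fun r : Ioi (0:ℝ) => F r) r
                ∂(Measure.comap Subtype.val volume) :=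
              lintegral_withDensity_eq_lintegral_mul _ hdens hF'
          _ = ∫⁻ r in Ioi (0:ℝ), ENNReal.ofReal (r ^ n) * F r :=
              lintegral_subtype_comap measurableSet_Ioi
                (fun r : ℝ => ENNReal.ofReal (r ^ n) * F r)

lemma sinhDerivAt {a : ℝ} (ha : a ≠ 0) (r : ℝ) :
    HasDerivAt (fun r => Real.sinh (a*r)/a) (Real.cosh (a*r)) r := by
  have h1 : HasDerivAt (fun r : ℝ => a*r) a r := by
    simpa using (hasDerivAt_id r).const_mul a
  have h3 := ((Real.hasDerivAt_sinh (a*r)).comp r h1).div_const a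
  rw [mul_div_cancel_right₀ _ ha] at h3
  exact h3

lemma lemA (n : ℕ) (hn : 1 ≤ n) (a : ℝ) (ha : 0 < a) (R : ℝ) (hR : 0 ≤ R) :
    ∫⁻ r in Ioc (0:ℝ) R, ENNReal.ofReal ((Real.sinh (a*r)/a)^n)
      ≤ ENNReal.ofReal ((Real.sinh (a*R)/a)^n / (a*n)) := by
  set T : ℝ → ℝ := fun r => Real.sinh (a*r)/a with hT
  set φ : ℝ → ℝ := fun r => (T r)^n with hφ
  set φ' : ℝ → ℝ := fun r => (n * (T r)^(n-1) * Real.cosh (a*r)) with hφ'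
  have hderiv : ∀ r : ℝ, HasDerivAt φ (φ' r) r := fun r => (sinhDerivAt ha.ne' r).pow n
  have hTnonneg : ∀ r ∈ Ioc (0:ℝ) R, 0 ≤ T r := by
    intro r hr
    have hr0 : 0 ≤ r := hr.1.le
    have : 0 ≤ a * r := by positivity
    exact div_nonneg (Real.sinh_nonneg_iff.mpr this) ha.le
  have hpt : ∀ r ∈ Ioc (0:ℝ) R, (T r)^n ≤ φ' r / (a*n) := by
    intro r hr
    have h1 : T r ≤ Real.cosh (a*r) / a := by
      show Real.sinh (a*r)/a ≤ _
      gcongr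
      exact (Real.sinh_lt_cosh _).le
    have h2 : (T r)^n = (T r)^(n-1) * T r := by
      conv_lhs => rw [← Nat.succ_pred_eq_of_pos hn, pow_succ]
      rw [Nat.pred_eq_sub_one]
    rw [h2, hφ']
    have h3 : (T r)^(n-1) * T r ≤ (T r)^(n-1) * (Real.cosh (a*r) / a) :=
      mul_le_mul_of_nonneg_left h1 (pow_nonneg (hTnonneg r hr) _)
    refine h3.trans_eq ?_
    have hn' : (0:ℝ) < n := by positivity
    field_simp
  have hcont : Continuous φ' := by
    fun_prop
  have hint : IntegrableOn φ' (Ioc 0 R) := hcont.integrableOn_Ioc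
  calc ∫⁻ r in Ioc (0:ℝ) R, ENNReal.ofReal ((T r)^n)
      ≤ ∫⁻ r in Ioc (0:ℝ) R, ENNReal.ofReal (φ' r / (a*n)) := by
        apply setLIntegral_mono' measurableSet_Ioc
        intro r hr
        exact ENNReal.ofReal_le_ofReal (hpt r hr)
    _ = ENNReal.ofReal (∫ r in Ioc (0:ℝ) R, φ' r / (a*n)) := by
        rw [MeasureTheory.ofReal_integral_eq_lintegral_ofReal (hint.div_const _)]
        filter_upwards [ae_restrict_mem measurableSet_Ioc] with r hr
        have h0 : 0 ≤ φ' r := by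
          have := hTnonneg r hr
          have : (0:ℝ) ≤ (T r)^(n-1) := pow_nonneg this _
          positivity
        positivity
    _ ≤ ENNReal.ofReal ((Real.sinh (a*R)/a)^n / (a*n)) := by
        apply ENNReal.ofReal_le_ofReal
        rw [MeasureTheory.integral_div, ← intervalIntegral.integral_of_le hR,
          intervalIntegral.integral_eq_sub_of_hasDerivAt (fun r _ => hderiv r)
            (hcont.intervalIntegrable _ _)]
        have : φ 0 = 0 := by
          simp [hφ, hT, Real.sinh_zero, zero_pow (by omega : n ≠ 0)]
        rw [this, sub_zero]

lemma lemB (a : ℝ) (ha : 0 < a) (β R : ℝ) (hβ : 0 < β) (hR : 0 < R) :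
    ∫⁻ r in Ioi R, ENNReal.ofReal ((Real.sinh (a*r)/a) ^ (-β))
      ≤ ENNReal.ofReal ((Real.sinh (a*R)/a) ^ (-β) / (a*β)) := by
  set T : ℝ → ℝ := fun r => Real.sinh (a*r)/a with hT
  have hTpos : ∀ r : ℝ, R ≤ r → 0 < T r := by
    intro r hr
    have h0 : 0 < r := hR.trans_le hr
    have : 0 < a * r := by positivity
    exact div_pos (Real.sinh_pos_iff.mpr this) ha
  set g : ℝ → ℝ := fun r => -((T r) ^ (-β)) / (a*β) with hg
  set g' : ℝ → ℝ := fun r => (T r) ^ (-β-1) * Real.cosh (a*r) / a with hg'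
  have hderiv : ∀ r ∈ Ici R, HasDerivAt g (g' r) r := by
    intro r hr
    have hTr := hTpos r hr
    have h1 : HasDerivAt (fun r => (T r) ^ (-β)) ((-β) * (T r) ^ (-β-1) * Real.cosh (a*r)) r := by
      have h2 := (Real.hasDerivAt_rpow_const (p := -β) (Or.inl hTr.ne')).comp r
        (sinhDerivAt ha.ne' r)
      exact h2
    have h3 := (h1.neg).div_const (a*β)
    have key : ∀ X : ℝ, -((-β) * X * Real.cosh (a*r)) / (a*β) = X * Real.cosh (a*r) / a := by
      intro X; field_simp; try ring
    have hgr : g' r = -((-β) * (T r ^ (-β-1)) * Real.cosh (a*r)) / (a*β) := by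
      show T r ^ (-β-1) * Real.cosh (a*r) / a = _
      rw [key (T r ^ (-β-1))]
    rw [hgr]
    exact h3
  have hg'nonneg : ∀ r ∈ Ioi R, 0 ≤ g' r := by
    intro r hr
    have hTr := hTpos r (le_of_lt hr)
    have h1 : (0:ℝ) ≤ (T r) ^ (-β-1) := (Real.rpow_pos_of_pos hTr _).le
    have h2 : (0:ℝ) < Real.cosh (a*r) := Real.cosh_pos _
    positivity
  have htend : Tendsto g atTop (𝓝 0) := by
    have h1 : Tendsto T atTop atTop := by
      apply tendsto_atTop_atTop_of_monotone
      · intro x y hxy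
        show Real.sinh (a*x)/a ≤ Real.sinh (a*y)/a
        gcongr
        exact Real.sinh_le_sinh.mpr (by nlinarith)
      · intro b
        obtain ⟨x, hx⟩ := Real.sinh_surjective (a*b)
        refine ⟨x/a, le_of_eq ?_⟩
        show b = Real.sinh (a*(x/a))/a
        rw [mul_div_cancel₀ _ ha.ne', hx, mul_div_cancel_left₀ _ ha.ne']
    have h2 : Tendsto (fun r => (T r) ^ (-β)) atTop (𝓝 0) :=
      (tendsto_rpow_neg_atTop hβ).comp h1
    have h3 := (h2.neg).div_const (a*β)
    simpa using h3
  have hint : IntegrableOn g' (Ioi R) :=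
    integrableOn_Ioi_deriv_of_nonneg' hderiv hg'nonneg htend
  have hval : ∫ r in Ioi R, g' r = (T R) ^ (-β) / (a*β) := by
    rw [integral_Ioi_of_hasDerivAt_of_nonneg' hderiv hg'nonneg htend, hg]
    ring
  have hpt : ∀ r ∈ Ioi R, (T r) ^ (-β) ≤ g' r := by
    intro r hr
    have hTr := hTpos r (le_of_lt hr)
    have h1 : T r ≤ Real.cosh (a*r) / a := by
      show Real.sinh (a*r)/a ≤ _
      gcongr
      exact (Real.sinh_lt_cosh _).le
    have h2 : (T r) ^ (-β) = (T r) ^ (-β-1) * T r := by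
      rw [← Real.rpow_add_one hTr.ne' (-β-1)]
      norm_num
    rw [h2]
    show _ ≤ T r ^ (-β-1) * Real.cosh (a*r) / a
    rw [mul_div_assoc]
    exact mul_le_mul_of_nonneg_left h1 (Real.rpow_pos_of_pos hTr _).le
  calc ∫⁻ r in Ioi R, ENNReal.ofReal ((T r) ^ (-β))
      ≤ ∫⁻ r in Ioi R, ENNReal.ofReal (g' r) := by
        apply setLIntegral_mono' measurableSet_Ioi
        intro r hr
        exact ENNReal.ofReal_le_ofReal (hpt r hr)
    _ = ENNReal.ofReal (∫ r in Ioi R, g' r) := by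
        rw [MeasureTheory.ofReal_integral_eq_lintegral_ofReal hint]
        filter_upwards [ae_restrict_mem measurableSet_Ioi] with r hr
        exact hg'nonneg r hr
    _ = ENNReal.ofReal ((Real.sinh (a*R)/a) ^ (-β) / (a*β)) := by rw [hval]

lemma oneD (n : ℕ) (hn : 1 ≤ n) (a : ℝ) (ha : 0 < a) (s lam ε : ℝ) (hs : 0 < s)
    (hlam : 0 < lam) (hβ : (n:ℝ) < lam * s) (hε : 0 < ε) :
    ∫⁻ r in Ioi (0:ℝ), ENNReal.ofReal
        ((Real.sinh (a*r)/a)^n * (1 + ε * (Real.sinh (a*r)/a) ^ lam) ^ (-s))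
      ≤ ENNReal.ofReal ((1/(a*n) + 1/(a*(lam*s - n))) * ε ^ (-(n:ℝ)/lam)) := by
  have hn' : (0:ℝ) < n := by exact_mod_cast hn
  set β : ℝ := lam*s - n with hβdef
  have hβ' : 0 < β := by simp [hβdef]; linarith
  set y : ℝ := a * ε ^ (-(1:ℝ)/lam) with hy
  have hy' : 0 < y := by
    have := Real.rpow_pos_of_pos hε (-(1:ℝ)/lam)
    positivity
  set R : ℝ := Real.arsinh y / a with hRdef
  have hR : 0 < R := div_pos (Real.arsinh_pos_iff.mpr hy') ha
  have haR : a * R = Real.arsinh y := by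
    rw [hRdef]; field_simp
  have hTR : Real.sinh (a*R)/a = ε ^ (-(1:ℝ)/lam) := by
    rw [haR, Real.sinh_arsinh, hy]; field_simp
  have hXnonneg : (0:ℝ) ≤ ε ^ (-(n:ℝ)/lam) := (Real.rpow_pos_of_pos hε _).le
  rw [← Set.Ioc_union_Ioi_eq_Ioi hR.le,
    lintegral_union measurableSet_Ioi (Set.Ioc_disjoint_Ioi le_rfl)]
  have piece1 : ∫⁻ r in Ioc (0:ℝ) R, ENNReal.ofReal
        ((Real.sinh (a*r)/a)^n * (1 + ε * (Real.sinh (a*r)/a) ^ lam) ^ (-s))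
      ≤ ENNReal.ofReal (ε ^ (-(n:ℝ)/lam) / (a*n)) := by
    have h1 : ∫⁻ r in Ioc (0:ℝ) R, ENNReal.ofReal
        ((Real.sinh (a*r)/a)^n * (1 + ε * (Real.sinh (a*r)/a) ^ lam) ^ (-s))
        ≤ ∫⁻ r in Ioc (0:ℝ) R, ENNReal.ofReal ((Real.sinh (a*r)/a)^n) := by
      apply setLIntegral_mono' measurableSet_Ioc
      intro r hr
      apply ENNReal.ofReal_le_ofReal
      have hr0 : 0 < r := hr.1
      have hT0 : (0:ℝ) ≤ Real.sinh (a*r)/a := by positivity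
      have h2 : (0:ℝ) ≤ ε * (Real.sinh (a*r)/a) ^ lam := by
        have := Real.rpow_nonneg hT0 lam
        positivity
      have h3 : (1 + ε * (Real.sinh (a*r)/a) ^ lam) ^ (-s) ≤ 1 :=
        Real.rpow_le_one_of_one_le_of_nonpos (by linarith) (by linarith)
      exact mul_le_of_le_one_right (pow_nonneg hT0 n) h3
    refine h1.trans ((lemA n hn a ha R hR.le).trans (le_of_eq ?_))
    congr 1
    rw [hTR, ← Real.rpow_natCast (ε ^ (-(1:ℝ)/lam)) n, ← Real.rpow_mul hε.le]
    congr 1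
    field_simp
  have piece2 : ∫⁻ r in Ioi R, ENNReal.ofReal
        ((Real.sinh (a*r)/a)^n * (1 + ε * (Real.sinh (a*r)/a) ^ lam) ^ (-s))
      ≤ ENNReal.ofReal (ε ^ (-(n:ℝ)/lam) / (a*β)) := by
    have hpt : ∀ r ∈ Ioi R, (Real.sinh (a*r)/a)^n * (1 + ε * (Real.sinh (a*r)/a) ^ lam) ^ (-s)
        ≤ ε^(-s) * (Real.sinh (a*r)/a) ^ (-β) := by
      intro r hr
      set T : ℝ := Real.sinh (a*r)/a with hTdef
      have hr0 : 0 < r := hR.trans hr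
      have hT0 : (0:ℝ) < T := by rw [hTdef]; positivity
      have hTlam : (0:ℝ) < T ^ lam := Real.rpow_pos_of_pos hT0 _
      have h1 : (1 + ε * T ^ lam) ^ (-s) ≤ (ε * T ^ lam) ^ (-s) :=
        Real.rpow_le_rpow_of_nonpos (by positivity) (by linarith) (by linarith)
      have h2 : (ε * T ^ lam) ^ (-s) = ε^(-s) * T ^ (lam * (-s)) := by
        rw [Real.mul_rpow hε.le hTlam.le, Real.rpow_mul hT0.le]
      have h3 : T^n * ((ε * T ^ lam) ^ (-s)) = ε^(-s) * T ^ (-β) := by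
        rw [h2, ← Real.rpow_natCast T n, ← mul_assoc, mul_comm (T ^ ((n:ℕ):ℝ)) (ε^(-s)),
          mul_assoc, ← Real.rpow_add hT0]
        congr 1
        rw [hβdef]
        push_cast
        ring
      calc T^n * (1 + ε * T ^ lam) ^ (-s) ≤ T^n * ((ε * T ^ lam) ^ (-s)) :=
            mul_le_mul_of_nonneg_left h1 (pow_nonneg hT0.le n)
        _ = ε^(-s) * T ^ (-β) := h3
    calc ∫⁻ r in Ioi R, ENNReal.ofReal
          ((Real.sinh (a*r)/a)^n * (1 + ε * (Real.sinh (a*r)/a) ^ lam) ^ (-s))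
        ≤ ∫⁻ r in Ioi R, ENNReal.ofReal (ε^(-s) * (Real.sinh (a*r)/a) ^ (-β)) := by
          apply setLIntegral_mono' measurableSet_Ioi
          intro r hr
          exact ENNReal.ofReal_le_ofReal (hpt r hr)
      _ = ENNReal.ofReal (ε^(-s)) * ∫⁻ r in Ioi R, ENNReal.ofReal ((Real.sinh (a*r)/a) ^ (-β)) := by
          rw [← lintegral_const_mul' _ _ ENNReal.ofReal_ne_top]
          congr 1
          ext r
          rw [← ENNReal.ofReal_mul (Real.rpow_pos_of_pos hε _).le]
      _ ≤ ENNReal.ofReal (ε^(-s)) * ENNReal.ofReal ((Real.sinh (a*R)/a) ^ (-β) / (a*β)) := by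
          exact mul_le_mul_right (lemB a ha β R hβ' hR) _
      _ = ENNReal.ofReal (ε ^ (-(n:ℝ)/lam) / (a*β)) := by
          rw [← ENNReal.ofReal_mul (Real.rpow_pos_of_pos hε _).le]
          congr 1
          rw [hTR, ← Real.rpow_mul hε.le, ← mul_div_assoc, ← Real.rpow_add hε]
          congr 1
          · rw [hβdef]; field_simp; ring
  calc _ ≤ ENNReal.ofReal (ε ^ (-(n:ℝ)/lam) / (a*n)) + ENNReal.ofReal (ε ^ (-(n:ℝ)/lam) / (a*β)) :=
        add_le_add piece1 piece2
    _ = ENNReal.ofReal ((1/(a*n) + 1/(a*β)) * ε ^ (-(n:ℝ)/lam)) := by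
        rw [← ENNReal.ofReal_add (by positivity) (by positivity)]
        congr 1
        field_simp

lemma decomp (f g u : ℝ≥0∞) (q s : ℝ) (hq0 : 0 < q) (hq1 : q < 1) (hs : s * (1-q) = q)
    (hu0 : u ≠ 0) (hut : u ≠ ⊤) :
    f ^ q * g = (f * u * g) ^ q * (g * u ^ (-s)) ^ (1 - q) := by
  have h1q : (0:ℝ) < 1 - q := by linarith
  rcases eq_or_ne g 0 with rfl | hg0
  · simp [ENNReal.zero_rpow_of_pos hq0, ENNReal.zero_rpow_of_pos h1q]
  rcases eq_or_ne g ⊤ with rfl | hgt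
  · have hu' : u ^ (-s) ≠ 0 := by
      rw [Ne, ENNReal.rpow_eq_zero_iff]
      rintro (⟨h, _⟩ | ⟨h, _⟩)
      exacts [hu0 h, hut h]
    rw [ENNReal.top_mul hu', ENNReal.top_rpow_of_pos h1q]
    rcases eq_or_ne f 0 with rfl | hf0
    · simp [ENNReal.zero_rpow_of_pos hq0]
    · have hfu : f * u ≠ 0 := mul_ne_zero hf0 hu0
      rw [ENNReal.mul_top hfu, ENNReal.top_rpow_of_pos hq0]
      have hfq : f ^ q ≠ 0 := by
        rw [Ne, ENNReal.rpow_eq_zero_iff]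
        rintro (⟨h, _⟩ | ⟨_, h⟩)
        exacts [hf0 h, absurd hq0 (not_lt.mpr h.le)]
      rw [ENNReal.mul_top hfq, ENNReal.top_mul_top]
  · have e1 : (f * u * g) ^ q = f ^ q * u ^ q * g ^ q := by
      rw [ENNReal.mul_rpow_of_nonneg _ _ hq0.le, ENNReal.mul_rpow_of_nonneg _ _ hq0.le]
    have e2 : (g * u ^ (-s)) ^ (1-q) = g ^ (1-q) * u ^ (-q) := by
      rw [ENNReal.mul_rpow_of_nonneg _ _ h1q.le, ← ENNReal.rpow_mul]
      congr 2
      rw [neg_mul, hs]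
    rw [e1, e2]
    have e3 : g ^ q * g ^ (1-q) = g := by
      rw [← ENNReal.rpow_add _ _ hg0 hgt]
      norm_num
    have e4 : u ^ q * u ^ (-q) = 1 := by
      rw [← ENNReal.rpow_add _ _ hu0 hut]
      norm_num
    rw [show f ^ q * u ^ q * g ^ q * (g ^ (1-q) * u ^ (-q))
        = f ^ q * (g ^ q * g ^ (1-q)) * (u ^ q * u ^ (-q)) from by ring, e3, e4, mul_one]

/-- Lemma 4.2 (generalized Carlson–Levin inequality, constant curvature bound), in geodesic
normal coordinates: `g` is the normalized Jacobian of the exponential map, bounded by the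
hyperbolic one, and `f` plays the role of the density `ρ`. -/
theorem stmt4 (d : ℕ) (hd : 2 ≤ d) (q c lam : ℝ)
    (hq0 : 0 < q) (hq1 : q < 1) (hc : 0 < c)
    (hlam : ((d:ℝ) - 1) * (1 - q) / q < lam)
    (p : ℝ) (hp : p = ((d:ℝ) - 1) * (1 - q) / (lam * q)) :
    ∃ C : ℝ, 0 < C ∧
      ∀ f g : EuclideanSpace ℝ (Fin d) → ℝ≥0∞, Measurable f → Measurable g →
      (∀ᵐ x : EuclideanSpace ℝ (Fin d), x ≠ 0 →
        g x ≤ ENNReal.ofReal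
          ((Real.sinh (Real.sqrt c * ‖x‖) / (Real.sqrt c * ‖x‖)) ^ (d - 1))) →
      ∫⁻ x, f x ^ q * g x ≤
        ENNReal.ofReal C * (∫⁻ x, f x * g x) ^ ((1 - p) * q) *
          (∫⁻ x, ENNReal.ofReal ((Real.sinh (Real.sqrt c * ‖x‖) / Real.sqrt c) ^ lam)
            * f x * g x) ^ (p * q) := by
  haveI hne : Nonempty (Fin d) := ⟨⟨0, by omega⟩⟩
  haveI hnontriv : Nontrivial (EuclideanSpace ℝ (Fin d)) := by infer_instance
  have hd2 : (2:ℝ) ≤ (d:ℝ) := by exact_mod_cast hd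
  have hdr : (0:ℝ) < (d:ℝ) - 1 := by linarith
  have h1q : (0:ℝ) < 1 - q := by linarith
  have hlam0 : 0 < lam := lt_trans (by positivity) hlam
  have hlamq : ((d:ℝ) - 1) * (1 - q) < lam * q := by
    have := (div_lt_iff₀ hq0).mp hlam
    linarith
  set a : ℝ := Real.sqrt c with ha_def
  have ha : 0 < a := Real.sqrt_pos.mpr hc
  set n : ℕ := d - 1 with hn_def
  have hn : 1 ≤ n := by omega
  have hnr : ((n:ℕ):ℝ) = (d:ℝ) - 1 := by
    rw [hn_def, Nat.cast_sub (by omega : 1 ≤ d)]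
    norm_num
  have hn0 : (0:ℝ) < (n:ℝ) := by rw [hnr]; linarith
  set s : ℝ := q / (1-q) with hs_def
  have hs : 0 < s := by positivity
  have hs1 : s * (1-q) = q := by rw [hs_def]; field_simp
  have hβ : (n:ℝ) < lam * s := by
    rw [hnr, hs_def, ← mul_div_assoc, lt_div_iff₀ h1q]
    linarith
  have hβ' : (0:ℝ) < lam * s - n := by linarith
  have hp0 : 0 < p := by rw [hp]; positivity
  have hp1 : p < 1 := by
    rw [hp, div_lt_one (by positivity)]
    linarith
  have hpqpos : 0 < p * q := by positivity
  have h1pq : 0 < (1-p) * q := by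
    have : 0 < 1 - p := by linarith
    positivity
  -- constants
  set σ : ℝ≥0∞ := (volume : Measure (EuclideanSpace ℝ (Fin d))).toSphere Set.univ with hσ_def
  have hσtop : σ ≠ ⊤ := measure_ne_top _ _
  set K : ℝ := 1/(a*(n:ℝ)) + 1/(a*(lam*s - (n:ℝ))) with hK_def
  have hK : 0 < K := by
    have h1 := mul_pos ha hn0
    have h2 := mul_pos ha hβ'
    rw [hK_def]
    positivity
  set CE : ℝ≥0∞ := (2:ℝ≥0∞)^q * (σ * ENNReal.ofReal K)^(1-q) with hCE_def
  have hCEtop : CE ≠ ⊤ := by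
    rw [hCE_def]
    exact ENNReal.mul_ne_top (ENNReal.rpow_lt_top_of_nonneg hq0.le (by norm_num)).ne
      (ENNReal.rpow_lt_top_of_nonneg h1q.le
        (ENNReal.mul_ne_top hσtop ENNReal.ofReal_ne_top)).ne
  refine ⟨max 1 CE.toReal, lt_of_lt_of_le one_pos (le_max_left _ _), ?_⟩
  have hCne : ENNReal.ofReal (max 1 CE.toReal) ≠ 0 := by
    rw [Ne, ENNReal.ofReal_eq_zero, not_le]
    exact lt_of_lt_of_le one_pos (le_max_left _ _)
  have hCE : CE ≤ ENNReal.ofReal (max 1 CE.toReal) := by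
    conv_lhs => rw [← ENNReal.ofReal_toReal hCEtop]
    exact ENNReal.ofReal_le_ofReal (le_max_right _ _)
  intro f g hf hg hgle
  set w : EuclideanSpace ℝ (Fin d) → ℝ≥0∞ :=
    fun x => ENNReal.ofReal ((Real.sinh (a * ‖x‖) / a) ^ lam) with hw_def
  set I1 : ℝ≥0∞ := ∫⁻ x, f x * g x with hI1_def
  set I2 : ℝ≥0∞ := ∫⁻ x, w x * f x * g x with hI2_def
  have hwmeas : Measurable w := by
    rw [hw_def]
    exact (((Real.continuous_sinh.comp (continuous_const.mul continuous_norm)).div_const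
      a).measurable.pow measurable_const).ennreal_ofReal
  have hx0 : ∀ᵐ x : EuclideanSpace ℝ (Fin d), x ≠ 0 := by
    have h0 : (volume : Measure (EuclideanSpace ℝ (Fin d))) {0} = 0 := measure_singleton _
    have hset : {x : EuclideanSpace ℝ (Fin d) | ¬ x ≠ 0} = {0} := by ext x; simp
    rw [ae_iff, hset]
    exact h0
  -- degenerate cases
  have hLofZero : (∀ᵐ x : EuclideanSpace ℝ (Fin d), f x * g x = 0) →
      ∫⁻ x, f x ^ q * g x = 0 := by
    intro h1
    rw [← lintegral_zero]
    apply lintegral_congr_ae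
    filter_upwards [h1] with x hx
    rcases mul_eq_zero.mp hx with h | h
    · rw [h, ENNReal.zero_rpow_of_pos hq0, zero_mul]
    · rw [h, mul_zero]
  by_cases hI10 : I1 = 0
  · have h1 : ∀ᵐ x : EuclideanSpace ℝ (Fin d), f x * g x = 0 := by
      have := (lintegral_eq_zero_iff (hf.mul hg)).mp hI10
      filter_upwards [this] with x hx
      simpa using hx
    rw [hLofZero h1]
    exact zero_le
  by_cases hI20 : I2 = 0
  · have h1 : ∀ᵐ x : EuclideanSpace ℝ (Fin d), f x * g x = 0 := by
      have h2 := (lintegral_eq_zero_iff ((hwmeas.mul hf).mul hg)).mp hI20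
      filter_upwards [h2, hx0] with x hx hx0'
      simp only [Pi.zero_apply] at hx
      rcases mul_eq_zero.mp hx with h | h
      · rcases mul_eq_zero.mp h with h' | h'
        · exfalso
          have h3 : 0 < ‖x‖ := norm_pos_iff.mpr hx0'
          have h4 : (0:ℝ) < (Real.sinh (a*‖x‖)/a) ^ lam :=
            Real.rpow_pos_of_pos (by positivity) _
          rw [hw_def] at h'
          simp only [ENNReal.ofReal_eq_zero, not_le] at h'
          linarith
        · rw [h', zero_mul]
      · rw [h, mul_zero]
    rw [hLofZero h1]
    exact zero_le
  by_cases hI1top : I1 = ⊤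
  · have h2 : I2 ^ (p*q) ≠ 0 := by
      rw [Ne, ENNReal.rpow_eq_zero_iff]
      rintro (⟨h, _⟩ | ⟨_, h⟩)
      exacts [hI20 h, absurd hpqpos (not_lt.mpr h.le)]
    rw [hI1top, ENNReal.top_rpow_of_pos h1pq, ENNReal.mul_top hCne, ENNReal.top_mul h2]
    exact le_top
  by_cases hI2top : I2 = ⊤
  · have h2 : ENNReal.ofReal (max 1 CE.toReal) * I1 ^ ((1-p)*q) ≠ 0 := by
      apply mul_ne_zero hCne
      rw [Ne, ENNReal.rpow_eq_zero_iff]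
      rintro (⟨h, _⟩ | ⟨_, h⟩)
      exacts [hI10 h, absurd h1pq (not_lt.mpr h.le)]
    rw [hI2top, ENNReal.top_rpow_of_pos hpqpos, ENNReal.mul_top h2]
    exact le_top
  -- main case
  set D : ℝ≥0∞ := I1 / I2 with hD_def
  have hD0 : D ≠ 0 := by
    rw [hD_def]
    simp [ENNReal.div_eq_zero_iff, hI10, hI2top]
  have hDtop : D ≠ ⊤ := by
    rw [hD_def]
    exact (ENNReal.div_lt_top hI1top hI20).ne
  set ε : ℝ := D.toReal with hε_def
  have hε : 0 < ε := ENNReal.toReal_pos hD0 hDtop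
  have hofε : ENNReal.ofReal ε = D := ENNReal.ofReal_toReal hDtop
  set u : EuclideanSpace ℝ (Fin d) → ℝ≥0∞ := fun x => 1 + ENNReal.ofReal ε * w x with hu_def
  have humeas : Measurable u := by
    rw [hu_def]
    exact measurable_const.add (measurable_const.mul hwmeas)
  have hu0 : ∀ x, u x ≠ 0 := by
    intro x
    rw [hu_def]
    simp
  have hut : ∀ x, u x ≠ ⊤ := by
    intro x
    rw [hu_def]
    refine ENNReal.add_ne_top.mpr ⟨ENNReal.one_ne_top, ENNReal.mul_ne_top ENNReal.ofReal_ne_top ?_⟩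
    rw [hw_def]
    exact ENNReal.ofReal_ne_top
  set A : EuclideanSpace ℝ (Fin d) → ℝ≥0∞ := fun x => f x * u x * g x with hA_def
  set B : EuclideanSpace ℝ (Fin d) → ℝ≥0∞ := fun x => g x * u x ^ (-s) with hB_def
  have hAmeas : Measurable A := (hf.mul humeas).mul hg
  have hBmeas : Measurable B := hg.mul (humeas.pow measurable_const)
  have hL : ∫⁻ x, f x ^ q * g x = ∫⁻ x, ((fun x => A x ^ q) * fun x => B x ^ (1-q)) x :=
    lintegral_congr fun x => by
      simp only [Pi.mul_apply]
      exact decomp (f x) (g x) (u x) q s hq0 hq1 hs1 (hu0 x) (hut x)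
  have hpq' : (1/q).HolderConjugate (1/(1-q)) := by
    rw [Real.holderConjugate_iff]
    constructor
    · rw [lt_div_iff₀ hq0]; linarith
    · rw [one_div, one_div, inv_inv, inv_inv]; ring
  have hH := ENNReal.lintegral_mul_le_Lp_mul_Lq volume hpq'
    (f := fun x => A x ^ q) (g := fun x => B x ^ (1-q))
    ((hAmeas.pow_const q).aemeasurable) ((hBmeas.pow_const (1-q)).aemeasurable)
  have e5 : ∀ x : EuclideanSpace ℝ (Fin d), (A x ^ q) ^ (1/q) = A x := fun x => by
    rw [← ENNReal.rpow_mul, mul_one_div_cancel hq0.ne', ENNReal.rpow_one]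
  have e6 : ∀ x : EuclideanSpace ℝ (Fin d), (B x ^ (1-q)) ^ (1/(1-q)) = B x := fun x => by
    rw [← ENNReal.rpow_mul, mul_one_div_cancel h1q.ne', ENNReal.rpow_one]
  simp only [e5, e6, one_div_one_div] at hH
  rw [hL]
  refine hH.trans ?_
  -- compute ∫ A
  have hAint : ∫⁻ x, A x = 2 * I1 := by
    have h1 : ∀ x : EuclideanSpace ℝ (Fin d),
        A x = f x * g x + ENNReal.ofReal ε * (w x * f x * g x) := fun x => by
      rw [hA_def, hu_def]; ring
    rw [lintegral_congr h1, lintegral_add_left (show Measurable fun x => f x * g x from hf.mul hg),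
      lintegral_const_mul' _ _ ENNReal.ofReal_ne_top, hofε, hD_def,
      ENNReal.div_mul_cancel hI20 hI2top, two_mul]
  -- bound ∫ B
  have hBint : ∫⁻ x, B x ≤ σ * ENNReal.ofReal (K * ε ^ (-(n:ℝ)/lam)) := by
    set Φ : ℝ → ℝ := fun r =>
      (Real.sinh (a*r)/(a*r))^n * (1 + ε * (Real.sinh (a*r)/a) ^ lam) ^ (-s) with hΦ_def
    have hΦmeas : Measurable fun r : ℝ => ENNReal.ofReal (Φ r) := by
      apply Measurable.ennreal_ofReal
      apply Measurable.mul
      · exact ((Real.continuous_sinh.comp (continuous_const.mul continuous_id)).measurable.div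
          (continuous_const.mul continuous_id).measurable).pow_const n
      · exact (measurable_const.add (measurable_const.mul
          (((Real.continuous_sinh.comp (continuous_const.mul continuous_id)).div_const
            a).measurable.pow measurable_const))).pow measurable_const
    have hpt : ∀ᵐ x : EuclideanSpace ℝ (Fin d), B x ≤ ENNReal.ofReal (Φ ‖x‖) := by
      filter_upwards [hgle, hx0] with x hgx hx
      have hnx : 0 < ‖x‖ := norm_pos_iff.mpr hx
      have hsinh : 0 < Real.sinh (a*‖x‖) := Real.sinh_pos_iff.mpr (by positivity)
      have htlam : (0:ℝ) ≤ (Real.sinh (a*‖x‖)/a) ^ lam := Real.rpow_nonneg (by positivity) _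
      have hu_eq : u x = ENNReal.ofReal (1 + ε * (Real.sinh (a*‖x‖)/a) ^ lam) := by
        rw [hu_def, ENNReal.ofReal_add (by norm_num) (by positivity), ENNReal.ofReal_one,
          ENNReal.ofReal_mul hε.le, hw_def]
      have hupow : u x ^ (-s)
          = ENNReal.ofReal ((1 + ε * (Real.sinh (a*‖x‖)/a) ^ lam) ^ (-s)) := by
        rw [hu_eq, ENNReal.ofReal_rpow_of_pos (by positivity)]
      calc B x = g x * u x ^ (-s) := rfl
        _ ≤ ENNReal.ofReal ((Real.sinh (a*‖x‖)/(a*‖x‖))^n)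
            * ENNReal.ofReal ((1 + ε * (Real.sinh (a*‖x‖)/a) ^ lam) ^ (-s)) := by
            rw [hupow]
            exact mul_le_mul_left (hgx hx) _
        _ = ENNReal.ofReal (Φ ‖x‖) := by
            rw [← ENNReal.ofReal_mul (by positivity)]
    have h2 : ∫⁻ x, B x ≤ ∫⁻ x : EuclideanSpace ℝ (Fin d), ENNReal.ofReal (Φ ‖x‖) :=
      lintegral_mono_ae hpt
    have h3 := lintegral_norm_polar (volume : Measure (EuclideanSpace ℝ (Fin d)))
      (fun r => ENNReal.ofReal (Φ r)) hΦmeas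
    have hrank : Module.finrank ℝ (EuclideanSpace ℝ (Fin d)) - 1 = n := by
      rw [finrank_euclideanSpace_fin]
    rw [hrank] at h3
    have h4 : ∫⁻ r in Ioi (0:ℝ), ENNReal.ofReal (r^n) * ENNReal.ofReal (Φ r)
        = ∫⁻ r in Ioi (0:ℝ), ENNReal.ofReal
            ((Real.sinh (a*r)/a)^n * (1 + ε * (Real.sinh (a*r)/a) ^ lam) ^ (-s)) := by
      apply setLIntegral_congr_fun measurableSet_Ioi
      intro r hr
      have hr0 : (0:ℝ) < r := hr
      beta_reduce
      rw [← ENNReal.ofReal_mul (by positivity), hΦ_def]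
      congr 1
      have h5 : (Real.sinh (a*r)/(a*r))^n * r^n = (Real.sinh (a*r)/a)^n := by
        rw [← mul_pow]
        congr 1
        field_simp
      calc r^n * ((Real.sinh (a*r)/(a*r))^n * (1 + ε * (Real.sinh (a*r)/a) ^ lam) ^ (-s))
          = ((Real.sinh (a*r)/(a*r))^n * r^n) * (1 + ε * (Real.sinh (a*r)/a) ^ lam) ^ (-s) := by
            ring
        _ = (Real.sinh (a*r)/a)^n * (1 + ε * (Real.sinh (a*r)/a) ^ lam) ^ (-s) := by rw [h5]
    have h6 := oneD n hn a ha s lam ε hs hlam0 hβ hε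
    calc ∫⁻ x, B x ≤ ∫⁻ x : EuclideanSpace ℝ (Fin d), ENNReal.ofReal (Φ ‖x‖) := h2
      _ = σ * ∫⁻ r in Ioi (0:ℝ), ENNReal.ofReal (r^n) * ENNReal.ofReal (Φ r) := h3
      _ = σ * ∫⁻ r in Ioi (0:ℝ), ENNReal.ofReal
            ((Real.sinh (a*r)/a)^n * (1 + ε * (Real.sinh (a*r)/a) ^ lam) ^ (-s)) := by rw [h4]
      _ ≤ σ * ENNReal.ofReal ((1/(a*(n:ℝ)) + 1/(a*(lam*s - (n:ℝ)))) * ε ^ (-(n:ℝ)/lam)) :=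
          mul_le_mul_right h6 σ
      _ = σ * ENNReal.ofReal (K * ε ^ (-(n:ℝ)/lam)) := by rw [hK_def]
  -- final assembly
  have h1 : (∫⁻ x, A x) ^ q = (2:ℝ≥0∞)^q * I1^q := by
    rw [hAint, ENNReal.mul_rpow_of_nonneg _ _ hq0.le]
  have h3 : ENNReal.ofReal (ε ^ (-(n:ℝ)/lam)) ^ (1-q) = D ^ (-(p*q)) := by
    rw [ENNReal.ofReal_rpow_of_pos (Real.rpow_pos_of_pos hε _), ← Real.rpow_mul hε.le]
    have hexp : (-(n:ℝ)/lam) * (1-q) = -(p*q) := by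
      rw [hnr, hp]
      field_simp
    rw [hexp, ← ENNReal.ofReal_rpow_of_pos hε, hofε]
  have h2 : (∫⁻ x, B x) ^ (1-q)
      ≤ (σ * ENNReal.ofReal K)^(1-q) * D ^ (-(p*q)) := by
    refine (ENNReal.rpow_le_rpow hBint h1q.le).trans_eq ?_
    rw [ENNReal.ofReal_mul hK.le, ← mul_assoc, ENNReal.mul_rpow_of_nonneg _ _ h1q.le, h3]
  have h4 : D ^ (-(p*q)) = I1 ^ (-(p*q)) * I2 ^ (p*q) := by
    rw [hD_def, div_eq_mul_inv,
      ENNReal.mul_rpow_of_ne_top hI1top (ENNReal.inv_ne_top.mpr hI20),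
      ENNReal.inv_rpow, ENNReal.rpow_neg I2, inv_inv]
  have h7 : I1 ^ q * I1 ^ (-(p*q)) = I1 ^ ((1-p)*q) := by
    rw [← ENNReal.rpow_add _ _ hI10 hI1top]
    congr 1
    ring
  calc (∫⁻ x, A x) ^ q * (∫⁻ x, B x) ^ (1-q)
      ≤ ((2:ℝ≥0∞)^q * I1^q) * ((σ * ENNReal.ofReal K)^(1-q) * (I1 ^ (-(p*q)) * I2 ^ (p*q))) := by
        rw [h1]
        exact mul_le_mul_right (h2.trans_eq (by rw [h4])) _
    _ = CE * (I1 ^ q * I1 ^ (-(p*q))) * I2 ^ (p*q) := by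
        rw [hCE_def]
        ring
    _ = CE * I1 ^ ((1-p)*q) * I2 ^ (p*q) := by rw [h7]
    _ ≤ ENNReal.ofReal (max 1 CE.toReal) * I1 ^ ((1-p)*q) * I2 ^ (p*q) :=
        mul_le_mul_left (mul_le_mul_left hCE _) _
end

section
/- Let d ≥ 2 be an integer, 0 < q < 1, let c : [0,∞) → ℝ be continuous, positive and non-decreasing, and let ψ : [0,∞) → ℝ be twice differentiable with ψ''(θ) = c(θ)·ψ(θ) for θ > 0, ψ(0) = 0, ψ'(0) = 1. Let λ > (d−1)(1−q)/q and set p = (d−1)(1−q)/(λq) ∈ (0,1). There exists a constant C > 0, depending only on λ, q, c and d, such that for all Borel measurable functions f, g : ℝ^d → [0,∞] with g(x) ≤ (ψ(‖x‖)/‖x‖)^{d−1} for almost every x ≠ 0, one has ∫_{ℝ^d} f(x)^q g(x) dx ≤ C · (∫_{ℝ^d} f(x) g(x) dx)^{(1−p)q} · (∫_{ℝ^d} ψ(‖x‖)^λ f(x) g(x) dx)^{pq}, where all integrals are with respect to Lebesgue measure on ℝ^d and take values in [0,∞]. -/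
open Real Filter Set MeasureTheory
open scoped ENNReal
section ODE
variable {c ψ ψ' : ℝ → ℝ}

/-- ψ' is monotone on positive reals where ψ ≥ 0 between. -/
lemma aux_mono (hc_pos : ∀ θ ≥ (0:ℝ), 0 < c θ)
    (hψ'' : ∀ θ > (0:ℝ), HasDerivAt ψ' (c θ * ψ θ) θ)
    {x y : ℝ} (hx : 0 < x) (hxy : x ≤ y)
    (hpos : ∀ s ∈ Ioo x y, 0 ≤ ψ s) : ψ' x ≤ ψ' y := by
  have hmono : MonotoneOn ψ' (Icc x y) := by
    apply monotoneOn_of_deriv_nonneg (convex_Icc x y)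
    · intro s hs
      exact ((hψ'' s (hx.trans_le hs.1)).continuousAt).continuousWithinAt
    · intro s hs
      rw [interior_Icc] at hs
      exact ((hψ'' s (hx.trans hs.1)).differentiableAt).differentiableWithinAt
    · intro s hs
      rw [interior_Icc] at hs
      rw [(hψ'' s (hx.trans hs.1)).deriv]
      exact mul_nonneg (hc_pos s (hx.trans hs.1).le).le (hpos s hs)
  exact hmono ⟨le_rfl, hxy⟩ ⟨hxy, le_rfl⟩ hxy

lemma aux_ge_one (hc_pos : ∀ θ ≥ (0:ℝ), 0 < c θ)
    (hψ : ∀ θ ≥ (0:ℝ), HasDerivAt ψ (ψ' θ) θ)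
    (hψ'' : ∀ θ > (0:ℝ), HasDerivAt ψ' (c θ * ψ θ) θ)
    (hψ0 : ψ 0 = 0) (hψ'0 : ψ' 0 = 1)
    {x : ℝ} (hx : 0 < x) (hpos : ∀ s ∈ Ioo 0 x, 0 < ψ s) : 1 ≤ ψ' x := by
  have hslope : Tendsto (fun s => ψ s / s) (nhdsWithin 0 (Ioi 0)) (nhds 1) := by
    have h0 : HasDerivAt ψ 1 0 := hψ'0 ▸ hψ 0 le_rfl
    have := (hasDerivAt_iff_tendsto_slope.1 h0).mono_left
      (nhdsWithin_mono 0 (by intro s hs; exact ne_of_gt hs : Ioi 0 ⊆ {(0:ℝ)}ᶜ))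
    refine this.congr' ?_
    filter_upwards [self_mem_nhdsWithin] with s hs
    simp [slope_def_field, hψ0, div_eq_inv_mul]
  refine le_of_forall_pos_le_add fun ε hε => ?_
  have hev : ∀ᶠ s in nhdsWithin 0 (Ioi 0), 1 - ε < ψ s / s :=
    hslope (Ioi_mem_nhds (by linarith))
  have hmem : Ioo (0:ℝ) x ∈ nhdsWithin 0 (Ioi 0) :=
    Ioo_mem_nhdsGT hx
  obtain ⟨s₀, hs₀slope, hs₀mem⟩ := (hev.and (eventually_of_mem hmem fun s hs => hs)).exists
  -- MVT on [0, s₀]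
  obtain ⟨ξ, hξmem, hξ⟩ := exists_hasDerivAt_eq_slope ψ ψ' hs₀mem.1
    (fun s hs => ((hψ s hs.1).continuousAt).continuousWithinAt)
    (fun s hs => hψ s hs.1.le)
  rw [hψ0, sub_zero, sub_zero] at hξ
  have h1 : 1 - ε < ψ' ξ := by rw [hξ]; exact hs₀slope
  have h2 : ψ' ξ ≤ ψ' x := by
    apply aux_mono hc_pos hψ'' hξmem.1 (hξmem.2.trans hs₀mem.2).le
    intro s hs
    exact (hpos s ⟨hξmem.1.trans hs.1, hs.2⟩).le
  linarith

lemma psi_pos (hc_pos : ∀ θ ≥ (0:ℝ), 0 < c θ)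
    (hψ : ∀ θ ≥ (0:ℝ), HasDerivAt ψ (ψ' θ) θ)
    (hψ'' : ∀ θ > (0:ℝ), HasDerivAt ψ' (c θ * ψ θ) θ)
    (hψ0 : ψ 0 = 0) (hψ'0 : ψ' 0 = 1) : ∀ r > (0:ℝ), 0 < ψ r := by
  by_contra hcon
  push_neg at hcon
  obtain ⟨r₀, hr₀pos, hr₀⟩ := hcon
  set S : Set ℝ := {r | 0 < r ∧ ∀ s, 0 < s → s ≤ r → 0 < ψ s} with hS
  -- small interval
  have hslope : Tendsto (fun s => ψ s / s) (nhdsWithin 0 (Ioi 0)) (nhds 1) := by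
    have h0 : HasDerivAt ψ 1 0 := hψ'0 ▸ hψ 0 le_rfl
    have := (hasDerivAt_iff_tendsto_slope.1 h0).mono_left
      (nhdsWithin_mono 0 (by intro s hs; exact ne_of_gt hs : Ioi 0 ⊆ {(0:ℝ)}ᶜ))
    refine this.congr' ?_
    filter_upwards [self_mem_nhdsWithin] with s hs
    simp [slope_def_field, hψ0, div_eq_inv_mul]
  have hev : ∀ᶠ s in nhdsWithin 0 (Ioi 0), (1:ℝ)/2 < ψ s / s :=
    hslope (Ioi_mem_nhds (by norm_num))
  obtain ⟨u, hu, hsub⟩ := mem_nhdsGT_iff_exists_Ioc_subset.1 hev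
  have huS : u ∈ S := by
    refine ⟨hu, fun s hs hsu => ?_⟩
    have := hsub ⟨hs, hsu⟩
    have hs2 : (0:ℝ) < ψ s / s := lt_trans (by norm_num) this
    exact (div_pos_iff.1 hs2).resolve_right (fun h => absurd h.2 (not_lt.2 hs.le)) |>.1
  -- S is bounded above by r₀
  have hbdd : BddAbove S := by
    refine ⟨r₀, fun r hr => ?_⟩
    by_contra hlt
    push_neg at hlt
    exact absurd (hr.2 r₀ hr₀pos hlt.le) (not_lt.2 hr₀)
  set m := sSup S with hm
  have humem : u ≤ m := le_csSup hbdd huS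
  have hmpos : 0 < m := lt_of_lt_of_le hu humem
  have hposm : ∀ s ∈ Ioo (0:ℝ) m, 0 < ψ s := by
    intro s hs
    obtain ⟨r, hrS, hsr⟩ := exists_lt_of_lt_csSup ⟨u, huS⟩ hs.2
    exact hrS.2 s hs.1 hsr.le
  have hψm : 0 < ψ m := by
    obtain ⟨ξ, hξmem, hξ⟩ := exists_hasDerivAt_eq_slope ψ ψ' hmpos
      (fun s hs => ((hψ s hs.1).continuousAt).continuousWithinAt)
      (fun s hs => hψ s hs.1.le)
    rw [hψ0, sub_zero, sub_zero] at hξ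
    have h1 : 1 ≤ ψ' ξ := aux_ge_one hc_pos hψ hψ'' hψ0 hψ'0 hξmem.1
      (fun s hs => hposm s ⟨hs.1, hs.2.trans hξmem.2⟩)
    have : ψ m / m = ψ' ξ := hξ.symm
    have : ψ m = m * ψ' ξ := by field_simp at this ⊢; linarith [this]
    nlinarith
  -- continuity beyond m
  have hcont : ContinuousAt ψ m := (hψ m hmpos.le).continuousAt
  have hev2 : ∀ᶠ s in nhds m, 0 < ψ s := hcont.eventually (eventually_gt_nhds hψm)
  obtain ⟨δ, hδpos, hδ⟩ := Metric.eventually_nhds_iff.1 hev2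
  have : m + δ/2 ∈ S := by
    refine ⟨by linarith, fun s hs hsle => ?_⟩
    rcases lt_or_ge s m with h | h
    · exact hposm s ⟨hs, h⟩
    · apply hδ
      rw [Real.dist_eq, abs_lt]
      constructor <;> [linarith; linarith]
  have := le_csSup hbdd this
  linarith

end ODE
section ODE2
variable {c ψ ψ' : ℝ → ℝ}


variable (hc_pos : ∀ θ ≥ (0:ℝ), 0 < c θ)
    (hc_mono : MonotoneOn c (Set.Ici 0))
    (hψ : ∀ θ ≥ (0:ℝ), HasDerivAt ψ (ψ' θ) θ)
    (hψ'' : ∀ θ > (0:ℝ), HasDerivAt ψ' (c θ * ψ θ) θ)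
    (hψ0 : ψ 0 = 0) (hψ'0 : ψ' 0 = 1)

include hc_pos hψ hψ'' hψ0 hψ'0

lemma psi'_ge_one : ∀ r > (0:ℝ), 1 ≤ ψ' r := fun r hr =>
  aux_ge_one hc_pos hψ hψ'' hψ0 hψ'0 hr
    (fun s hs => psi_pos hc_pos hψ hψ'' hψ0 hψ'0 s hs.1)

lemma psi_ge_self : ∀ r ≥ (0:ℝ), r ≤ ψ r := by
  intro r hr
  rcases eq_or_lt_of_le hr with h | h
  · simp [← h, hψ0]
  obtain ⟨ξ, hξmem, hξ⟩ := exists_hasDerivAt_eq_slope ψ ψ' h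
    (fun s hs => ((hψ s hs.1).continuousAt).continuousWithinAt)
    (fun s hs => hψ s hs.1.le)
  rw [hψ0, sub_zero, sub_zero] at hξ
  have h1 : 1 ≤ ψ' ξ := psi'_ge_one hc_pos hψ hψ'' hψ0 hψ'0 ξ hξmem.1
  rw [hξ, le_div_iff₀ h] at h1
  linarith

lemma psi_strictMono : StrictMonoOn ψ (Ici 0) := by
  intro x hx y hy hxy
  obtain ⟨ξ, hξmem, hξ⟩ := exists_hasDerivAt_eq_slope ψ ψ' hxy
    (fun s hs => ((hψ s (le_trans hx.out hs.1)).continuousAt).continuousWithinAt)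
    (fun s hs => hψ s (le_trans hx.out hs.1.le))
  have h1 : 1 ≤ ψ' ξ := psi'_ge_one hc_pos hψ hψ'' hψ0 hψ'0 ξ (lt_of_le_of_lt hx.out hξmem.1)
  rw [hξ, le_div_iff₀ (by linarith : 0 < y - x)] at h1
  linarith

include hc_mono in
lemma psi'_ge_sqrt : ∀ r > (0:ℝ), Real.sqrt (c 0) * ψ r ≤ ψ' r := by
  intro r hr
  have hpos := psi_pos hc_pos hψ hψ'' hψ0 hψ'0
  have hge1 := psi'_ge_one hc_pos hψ hψ'' hψ0 hψ'0
  set h : ℝ → ℝ := fun s => ψ' s ^ 2 - c 0 * ψ s ^ 2 with hh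
  have hmono : ∀ x y : ℝ, 0 < x → x ≤ y → h x ≤ h y := by
    intro x y hx hxy
    have : MonotoneOn h (Icc x y) := by
      apply monotoneOn_of_deriv_nonneg (convex_Icc x y)
      · intro s hs
        have hs0 : 0 < s := lt_of_lt_of_le hx hs.1
        exact (((hψ'' s hs0).pow 2).sub
          (((hψ s hs0.le).pow 2).const_mul (c 0))).continuousAt.continuousWithinAt
      · intro s hs
        rw [interior_Icc] at hs
        have hs0 : 0 < s := hx.trans hs.1
        exact (((hψ'' s hs0).pow 2).sub
          (((hψ s hs0.le).pow 2).const_mul (c 0))).differentiableAt.differentiableWithinAt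
      · intro s hs
        rw [interior_Icc] at hs
        have hs0 : 0 < s := hx.trans hs.1
        rw [show deriv h s = _ from (((hψ'' s hs0).pow 2).sub (((hψ s hs0.le).pow 2).const_mul (c 0))).deriv]
        have hcs : c 0 ≤ c s := hc_mono (le_refl (0:ℝ)) hs0.le hs0.le
        have h1 : 0 < ψ s := hpos s hs0
        have h2 : 1 ≤ ψ' s := hge1 s hs0
        norm_num
        nlinarith [mul_nonneg (mul_nonneg (by linarith : (0:ℝ) ≤ ψ' s) h1.le) (sub_nonneg.2 hcs)]
    exact this ⟨le_rfl, hxy⟩ ⟨hxy, le_rfl⟩ hxy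
  have hlim : 1 ≤ h r := by
    refine le_of_forall_pos_le_add fun ε hε => ?_
    have hcont : ContinuousAt (fun s => c 0 * ψ s ^ 2) 0 :=
      (((hψ 0 le_rfl).continuousAt).pow 2).const_mul (c 0)
    have : Tendsto (fun s => c 0 * ψ s ^ 2) (nhds 0) (nhds 0) := by
      have := hcont.tendsto
      simpa [hψ0] using this
    have hev : ∀ᶠ s in nhds (0:ℝ), c 0 * ψ s ^ 2 < ε := this (Iio_mem_nhds hε)
    obtain ⟨δ, hδpos, hδ⟩ := Metric.eventually_nhds_iff.1 hev
    set s₀ := min (δ/2) r with hs₀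
    have hs₀pos : 0 < s₀ := lt_min (by linarith) hr
    have hs₀r : s₀ ≤ r := min_le_right _ _
    have hsmall : c 0 * ψ s₀ ^ 2 < ε := by
      apply hδ
      rw [Real.dist_eq, abs_sub_comm, abs_lt]
      have := min_le_left (δ/2) r
      constructor <;> [linarith; linarith]
    have h1 : 1 ≤ ψ' s₀ := hge1 s₀ hs₀pos
    have : h s₀ ≤ h r := hmono s₀ r hs₀pos hs₀r
    simp only [hh] at this ⊢
    nlinarith
  have h1 : 0 < ψ r := hpos r hr
  have h2 : 1 ≤ ψ' r := hge1 r hr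
  have hc0 : 0 ≤ c 0 := (hc_pos 0 le_rfl).le
  have key : c 0 * ψ r ^ 2 ≤ ψ' r ^ 2 := by simp only [hh] at hlim; nlinarith
  have := Real.sqrt_le_sqrt key
  rwa [Real.sqrt_mul hc0, Real.sqrt_sq h1.le, Real.sqrt_sq (by linarith)] at this

end ODE2
section FTC
variable {ψ ψ' : ℝ → ℝ}

/-- J₁ bound: ∫_{(0,a]} ψ^{d-1} ≤ ψ(a)^{d-1}/((d-1)·κ), where κ·ψ ≤ ψ'. -/
lemma bound_J1 (d : ℕ) (hd : 2 ≤ d) {κ : ℝ} (hκ : 0 < κ)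
    (hψc : ∀ r ≥ (0:ℝ), HasDerivAt ψ (ψ' r) r) (hψ0 : ψ 0 = 0)
    (hpos : ∀ r > (0:ℝ), 0 < ψ r) (hψ'1 : ∀ r > (0:ℝ), 1 ≤ ψ' r)
    (hlow : ∀ r > (0:ℝ), κ * ψ r ≤ ψ' r)
    {a : ℝ} (ha : 0 ≤ a) :
    ∫⁻ r in Ioc 0 a, ENNReal.ofReal (ψ r ^ (d-1)) ≤
      ENNReal.ofReal (ψ a ^ (d-1) / (((d-1:ℕ):ℝ) * κ)) := by
  set Φ : ℝ → ℝ := fun r => ψ r ^ (d-1) / (((d-1:ℕ):ℝ) * κ) with hΦ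
  set Φ' : ℝ → ℝ := fun r => (((d-1:ℕ):ℝ) * ψ r ^ (d-1-1) * ψ' r) / (((d-1:ℕ):ℝ) * κ) with hΦ'
  have hd1 : (0:ℝ) < (d:ℝ) - 1 := by
    have : (2:ℝ) ≤ d := by exact_mod_cast hd
    linarith
  have hdc : ((d-1 : ℕ) : ℝ) = (d:ℝ) - 1 := by
    have : 1 ≤ d := le_trans one_le_two hd
    push_cast [this]; ring
  have hΦderiv : ∀ r ∈ Ioo 0 a, HasDerivAt Φ (Φ' r) r := by
    intro r hr
    exact ((hψc r hr.1.le).pow (d-1)).div_const _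
  have hΦcont : ContinuousOn Φ (Icc 0 a) := fun r hr =>
    (((hψc r hr.1).continuousAt.pow (d-1)).div_const _).continuousWithinAt
  have hΦ'nonneg : ∀ r ∈ Ioo 0 a, 0 ≤ Φ' r := by
    intro r hr
    apply div_nonneg _ (by positivity)
    have h1 := hpos r hr.1
    have h2 := hψ'1 r hr.1
    have : (0:ℝ) ≤ ((d-1:ℕ):ℝ) := by positivity
    positivity
  have hptwise : ∀ r ∈ Ioo 0 a, ψ r ^ (d-1) ≤ Φ' r := by
    intro r hr
    have h1 := hpos r hr.1
    have h2 := hlow r hr.1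
    rw [hΦ']
    rw [le_div_iff₀ (by rw [hdc]; positivity)]
    have hsucc : ψ r ^ (d-1-1) * ψ r = ψ r ^ (d-1) := by
      rw [← pow_succ]
      congr 1
      omega
    calc ψ r ^ (d-1) * (((d-1:ℕ):ℝ) * κ) = ((d-1:ℕ):ℝ) * (ψ r ^ (d-1-1) * (κ * ψ r)) := by
          rw [← hsucc]; ring
      _ ≤ ((d-1:ℕ):ℝ) * (ψ r ^ (d-1-1) * ψ' r) := by
          apply mul_le_mul_of_nonneg_left _ (by positivity)
          exact mul_le_mul_of_nonneg_left h2 (by positivity)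
      _ = ((d-1:ℕ):ℝ) * ψ r ^ (d-1-1) * ψ' r := by ring
  have hint : IntegrableOn Φ' (Ioo 0 a) volume := by
    have := intervalIntegral.integrableOn_deriv_of_nonneg (a := 0) (b := a)
      (hΦcont) hΦderiv hΦ'nonneg
    exact this.mono_set Ioo_subset_Ioc_self
  -- now the chain
  calc ∫⁻ r in Ioc 0 a, ENNReal.ofReal (ψ r ^ (d-1))
      = ∫⁻ r in Ioo 0 a, ENNReal.ofReal (ψ r ^ (d-1)) := by
        rw [Measure.restrict_congr_set Ioo_ae_eq_Ioc.symm]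
    _ ≤ ∫⁻ r in Ioo 0 a, ENNReal.ofReal (Φ' r) := by
        apply lintegral_mono_ae
        filter_upwards [ae_restrict_mem measurableSet_Ioo] with r hr
        exact ENNReal.ofReal_le_ofReal (hptwise r hr)
    _ = ENNReal.ofReal (∫ r in Ioo 0 a, Φ' r) := by
        rw [ofReal_integral_eq_lintegral_ofReal hint]
        filter_upwards [ae_restrict_mem measurableSet_Ioo] with r hr
        exact hΦ'nonneg r hr
    _ ≤ ENNReal.ofReal (ψ a ^ (d-1) / (((d-1:ℕ):ℝ) * κ)) := by
        apply ENNReal.ofReal_le_ofReal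
        have heq : ∫ r in Ioo 0 a, Φ' r = Φ a - Φ 0 := by
          rw [Measure.restrict_congr_set Ioo_ae_eq_Ioc, ← intervalIntegral.integral_of_le ha]
          apply intervalIntegral.integral_eq_sub_of_hasDerivAt_of_le ha hΦcont hΦderiv
          rw [intervalIntegrable_iff_integrableOn_Ioo_of_le ha]
          exact hint
        rw [heq, hΦ]
        simp only [hψ0]
        rw [zero_pow (by omega : d - 1 ≠ 0), zero_div, sub_zero]

end FTC
section FTC2
variable {ψ ψ' : ℝ → ℝ}

/-- J₂ bound: ∫_{(a,∞)} ψ^{-β} ≤ ψ(a)^{-β}/(β·κ). -/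
lemma bound_J2 {β κ : ℝ} (hβ : 0 < β) (hκ : 0 < κ)
    (hψc : ∀ r ≥ (0:ℝ), HasDerivAt ψ (ψ' r) r)
    (hpos : ∀ r > (0:ℝ), 0 < ψ r)
    (hge : ∀ r ≥ (0:ℝ), r ≤ ψ r)
    (hlow : ∀ r > (0:ℝ), κ * ψ r ≤ ψ' r)
    {a : ℝ} (ha : 0 < a) :
    ∫⁻ r in Ioi a, ENNReal.ofReal (ψ r ^ (-β)) ≤
      ENNReal.ofReal (ψ a ^ (-β) / (β * κ)) := by
  set Φ : ℝ → ℝ := fun r => -(ψ r ^ (-β)) / (β * κ) with hΦ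
  set Φ' : ℝ → ℝ := fun r => -(ψ' r * -β * ψ r ^ (-β - 1)) / (β * κ) with hΦ'
  have hΦderiv : ∀ r ∈ Ici a, HasDerivAt Φ (Φ' r) r := by
    intro r hr
    have hr0 : 0 < r := lt_of_lt_of_le ha hr
    exact (((hψc r hr0.le).rpow_const (Or.inl (hpos r hr0).ne')).neg).div_const _
  have hΦ'nonneg : ∀ r ∈ Ioi a, 0 ≤ Φ' r := by
    intro r hr
    have hr0 : 0 < r := ha.trans hr
    have h1 := hpos r hr0
    have h2 : (0:ℝ) ≤ ψ' r := le_trans (by positivity) (hlow r hr0)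
    rw [hΦ']
    apply div_nonneg _ (by positivity)
    nlinarith [Real.rpow_pos_of_pos h1 (-β - 1),
      mul_nonneg (mul_nonneg h2 hβ.le) (Real.rpow_pos_of_pos h1 (-β - 1)).le]
  have htend : Tendsto Φ atTop (nhds 0) := by
    have hev : (id : ℝ → ℝ) ≤ᶠ[atTop] ψ := by
      filter_upwards [eventually_ge_atTop (0:ℝ)] with r hr
      exact hge r hr
    have h1 : Tendsto ψ atTop atTop := tendsto_atTop_mono' atTop hev tendsto_id
    have h2 : Tendsto (fun r => ψ r ^ (-β)) atTop (nhds 0) :=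
      (tendsto_rpow_neg_atTop hβ).comp h1
    have h3 := (h2.neg).div_const (β * κ)
    simpa using h3
  have hptwise : ∀ r ∈ Ioi a, ψ r ^ (-β) ≤ Φ' r := by
    intro r hr
    have hr0 : 0 < r := ha.trans hr
    have h1 := hpos r hr0
    have h2 := hlow r hr0
    rw [hΦ', le_div_iff₀ (by positivity)]
    have hkey : ψ r ^ (-β - 1) * ψ r = ψ r ^ (-β) := by
      rw [← Real.rpow_add_one h1.ne' (-β - 1)]
      congr 1
      ring
    calc ψ r ^ (-β) * (β * κ) = β * (ψ r ^ (-β - 1) * (κ * ψ r)) := by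
          rw [← hkey]; ring
      _ ≤ β * (ψ r ^ (-β - 1) * ψ' r) := by
          apply mul_le_mul_of_nonneg_left _ hβ.le
          exact mul_le_mul_of_nonneg_left h2 (by positivity)
      _ = -(ψ' r * -β * ψ r ^ (-β - 1)) := by ring
  have hcont : ContinuousWithinAt Φ (Ici a) a := (hΦderiv a self_mem_Ici).continuousAt.continuousWithinAt
  have hint : IntegrableOn Φ' (Ioi a) volume :=
    integrableOn_Ioi_deriv_of_nonneg hcont (fun x hx => hΦderiv x (mem_Ici.2 (le_of_lt hx))) hΦ'nonneg htend
  have heq : ∫ r in Ioi a, Φ' r = 0 - Φ a :=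
    integral_Ioi_of_hasDerivAt_of_nonneg hcont (fun x hx => hΦderiv x (mem_Ici.2 (le_of_lt hx))) hΦ'nonneg htend
  calc ∫⁻ r in Ioi a, ENNReal.ofReal (ψ r ^ (-β))
      ≤ ∫⁻ r in Ioi a, ENNReal.ofReal (Φ' r) := by
        apply lintegral_mono_ae
        filter_upwards [ae_restrict_mem measurableSet_Ioi] with r hr
        exact ENNReal.ofReal_le_ofReal (hptwise r hr)
    _ = ENNReal.ofReal (∫ r in Ioi a, Φ' r) := by
        rw [ofReal_integral_eq_lintegral_ofReal hint]
        filter_upwards [ae_restrict_mem measurableSet_Ioi] with r hr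
        exact hΦ'nonneg r hr
    _ ≤ ENNReal.ofReal (ψ a ^ (-β) / (β * κ)) := by
        apply ENNReal.ofReal_le_ofReal
        rw [heq, hΦ]
        simp only [zero_sub, neg_div, neg_neg]
        exact le_rfl

end FTC2
lemma lintegral_norm_polar_s5 (d : ℕ) (hd : 1 ≤ d) (F : ℝ → ℝ≥0∞) (hF : Measurable F) :
    ∫⁻ x : EuclideanSpace ℝ (Fin d), F ‖x‖ =
      (volume : Measure (EuclideanSpace ℝ (Fin d))).toSphere univ *
        ∫⁻ r in Ioi (0:ℝ), ENNReal.ofReal (r ^ (d-1)) * F r := by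
  set E := EuclideanSpace ℝ (Fin d)
  set μ : Measure E := volume
  have hdim : Module.finrank ℝ E = d := finrank_euclideanSpace_fin
  haveI : Nontrivial E := Module.nontrivial_of_finrank_pos (R := ℝ) (by omega : 0 < Module.finrank ℝ E)
  calc ∫⁻ x : E, F ‖x‖ ∂μ
      = ∫⁻ x : E, F ‖x‖ ∂(μ.restrict ({0}ᶜ)) := by
        rw [MeasureTheory.restrict_compl_singleton]
    _ = ∫⁻ x : ({(0:E)}ᶜ : Set E), F ‖x.1‖ ∂(μ.comap Subtype.val) :=
        (lintegral_subtype_comap (measurableSet_singleton (0:E)).compl (fun x => F ‖x‖)).symm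
    _ = ∫⁻ y : (Metric.sphere (0:E) 1) × (Ioi (0:ℝ)), F y.2
          ∂(μ.toSphere.prod (.volumeIoiPow (Module.finrank ℝ E - 1))) := by
        rw [← μ.measurePreserving_homeomorphUnitSphereProd.lintegral_comp_emb
          (Homeomorph.measurableEmbedding _) (fun y => F y.2.1)]
        simp only [homeomorphUnitSphereProd_apply_snd_coe, div_one]
    _ = μ.toSphere univ * ∫⁻ r : Ioi (0:ℝ), F r ∂(Measure.volumeIoiPow (Module.finrank ℝ E - 1)) := by
        have hmeas : Measurable (fun y : (Metric.sphere (0:E) 1) × (Ioi (0:ℝ)) => F y.2.1) :=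
          (hF.comp measurable_subtype_coe).comp measurable_snd
        rw [MeasureTheory.lintegral_prod _ hmeas.aemeasurable]
        simp only [lintegral_const]
        rw [mul_comm]
    _ = μ.toSphere univ * ∫⁻ r in Ioi (0:ℝ), ENNReal.ofReal (r ^ (d-1)) * F r := by
        congr 1
        have hf1 : Measurable (fun r : (Ioi (0:ℝ)) => ENNReal.ofReal (r.1 ^ (Module.finrank ℝ E - 1))) :=
          (measurable_subtype_coe.pow_const _).ennreal_ofReal
        have hg1 : Measurable (fun r : (Ioi (0:ℝ)) => F r.1) := hF.comp measurable_subtype_coe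
        rw [Measure.volumeIoiPow, lintegral_withDensity_eq_lintegral_mul _ hf1 hg1]
        rw [hdim]
        rw [← lintegral_subtype_comap (measurableSet_Ioi (a := (0:ℝ)))
          (fun r => ENNReal.ofReal (r ^ (d-1)) * F r)]
        rfl
lemma real_opt {a b q p K dm1 C1 C2 : ℝ} (ha : 0 < a) (hb : 0 < b)
    (hq0 : 0 < q) (hq1 : q < 1) (hK : 0 < K) (hdm1 : 0 < dm1)
    (hC1 : 0 ≤ C1) (hC2 : 0 ≤ C2) (hp : p = dm1 / K) :
    a ^ q * (C1 * ((b/a) ^ (q/(K*(1-q)))) ^ dm1) ^ (1-q) +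
      b ^ q * (C2 * ((b/a) ^ (q/(K*(1-q)))) ^ (-(K - dm1))) ^ (1-q) =
    (C1 ^ (1-q) + C2 ^ (1-q)) * (a ^ ((1-p)*q) * b ^ (p*q)) := by
  have hq1' : 0 < 1 - q := by linarith
  have hab : 0 < b / a := div_pos hb ha
  set s : ℝ := q / (K * (1-q)) with hs
  have habs : (0:ℝ) < (b/a) ^ s := rpow_pos_of_pos hab s
  -- exponent identities
  have he1 : s * dm1 * (1-q) = p * q := by
    rw [hp, hs]; field_simp
  have he2 : s * (-(K - dm1)) * (1-q) = p * q - q := by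
    rw [hp, hs]; field_simp; ring
  have ht1 : (((b/a) ^ s) ^ dm1) ^ (1-q) = (b/a) ^ (p*q) := by
    rw [← Real.rpow_mul hab.le, ← Real.rpow_mul hab.le, he1]
  have ht2 : (((b/a) ^ s) ^ (-(K - dm1))) ^ (1-q) = (b/a) ^ (p*q - q) := by
    rw [← Real.rpow_mul hab.le, ← Real.rpow_mul hab.le, he2]
  rw [Real.mul_rpow hC1 (rpow_nonneg (rpow_pos_of_pos hab s).le _),
      Real.mul_rpow hC2 (rpow_nonneg (rpow_pos_of_pos hab s).le _), ht1, ht2]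
  rw [Real.div_rpow hb.le ha.le, Real.div_rpow hb.le ha.le]
  have h1 : a ^ q * (C1 ^ (1-q) * (b ^ (p*q) / a ^ (p*q))) =
      C1 ^ (1-q) * (a ^ ((1-p)*q) * b ^ (p*q)) := by
    rw [mul_comm (a ^ q), mul_assoc]
    congr 1
    rw [div_eq_mul_inv, ← Real.rpow_neg ha.le, mul_assoc, ← Real.rpow_add ha,
      show -(p*q) + q = (1-p)*q from by ring, mul_comm]
  have h2 : b ^ q * (C2 ^ (1-q) * (b ^ (p*q - q) / a ^ (p*q - q))) =
      C2 ^ (1-q) * (a ^ ((1-p)*q) * b ^ (p*q)) := by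
    rw [mul_comm (b ^ q), mul_assoc]
    congr 1
    rw [div_eq_mul_inv, ← Real.rpow_neg ha.le, mul_right_comm, ← Real.rpow_add hb,
      show p*q - q + q = p*q from by ring, show -(p*q-q) = (1-p)*q from by ring]
    ring
  rw [h1, h2]
  ring

set_option maxHeartbeats 1000000 in
/-- Lemma 6.2 (generalized Carlson–Levin inequality, unbounded curvature), in geodesic
normal coordinates: `ψ` solves `ψ'' = c ψ`, `ψ(0)=0`, `ψ'(0)=1`, `g` is the normalized
Jacobian of the exponential map, bounded by `(ψ(‖x‖)/‖x‖)^{d-1}`. -/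
theorem stmt5 (d : ℕ) (hd : 2 ≤ d) (q : ℝ) (hq0 : 0 < q) (hq1 : q < 1)
    (c ψ ψ' : ℝ → ℝ)
    (hc_cont : ContinuousOn c (Set.Ici 0))
    (hc_pos : ∀ θ ≥ (0:ℝ), 0 < c θ)
    (hc_mono : MonotoneOn c (Set.Ici 0))
    (hψ : ∀ θ ≥ (0:ℝ), HasDerivAt ψ (ψ' θ) θ)
    (hψ'' : ∀ θ > (0:ℝ), HasDerivAt ψ' (c θ * ψ θ) θ)
    (hψ0 : ψ 0 = 0) (hψ'0 : ψ' 0 = 1)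
    (lam : ℝ) (hlam : ((d:ℝ) - 1) * (1 - q) / q < lam)
    (p : ℝ) (hp : p = ((d:ℝ) - 1) * (1 - q) / (lam * q)) :
    ∃ C : ℝ, 0 < C ∧
      ∀ f g : EuclideanSpace ℝ (Fin d) → ℝ≥0∞, Measurable f → Measurable g →
      (∀ᵐ x : EuclideanSpace ℝ (Fin d), x ≠ 0 →
        g x ≤ ENNReal.ofReal ((ψ ‖x‖ / ‖x‖) ^ (d - 1))) →
      ∫⁻ x, f x ^ q * g x ≤
        ENNReal.ofReal C * (∫⁻ x, f x * g x) ^ ((1 - p) * q) *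
          (∫⁻ x, ENNReal.ofReal (ψ ‖x‖ ^ lam) * f x * g x) ^ (p * q) := by
  classical
  -- numeric facts
  have hq1' : (0:ℝ) < 1 - q := by linarith
  have hd1 : (0:ℝ) < (d:ℝ) - 1 := by
    have : (2:ℝ) ≤ (d:ℝ) := by exact_mod_cast hd
    linarith
  have hdc : ((d-1:ℕ):ℝ) = (d:ℝ) - 1 := by
    have h1 : 1 ≤ d := by omega
    push_cast [h1]; ring
  have hlam0 : 0 < lam := lt_of_le_of_lt (by positivity) hlam
  set K : ℝ := lam * q / (1 - q) with hKdef
  have hK0 : 0 < K := by positivity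
  have hβ0 : 0 < K - ((d:ℝ) - 1) := by
    have hlam' := hlam
    rw [div_lt_iff₀ hq0] at hlam'
    have h3 : ((d:ℝ)-1) < lam * q / (1-q) := by
      rw [lt_div_iff₀ hq1']; nlinarith
    rw [hKdef]; linarith
  set β : ℝ := K - ((d:ℝ) - 1) with hβdef
  have hp' : p = ((d:ℝ) - 1) / K := by
    rw [hp, hKdef]
    field_simp
  have hp0 : 0 < p := by rw [hp']; positivity
  have hp1 : p < 1 := by
    rw [hp', div_lt_one hK0]; linarith
  -- ODE facts
  have hpos := psi_pos hc_pos hψ hψ'' hψ0 hψ'0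
  have hge1 := psi'_ge_one hc_pos hψ hψ'' hψ0 hψ'0
  have hgeself := psi_ge_self hc_pos hψ hψ'' hψ0 hψ'0
  have hsmono := psi_strictMono hc_pos hψ hψ'' hψ0 hψ'0
  have hsqrt := psi'_ge_sqrt hc_pos hc_mono hψ hψ'' hψ0 hψ'0
  set κ : ℝ := Real.sqrt (c 0) with hκdef
  have hκ : 0 < κ := Real.sqrt_pos.2 (hc_pos 0 le_rfl)
  -- continuity
  have hψcontAt : ∀ r : ℝ, 0 ≤ r → ContinuousAt ψ r := fun r hr => (hψ r hr).continuousAt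
  set ψt : ℝ → ℝ := fun r => ψ (max r 0) with hψtdef
  have hψtcont : Continuous ψt := by
    have hmax : Continuous (fun r : ℝ => max r 0) := continuous_id.max continuous_const
    rw [continuous_iff_continuousAt]
    intro r
    show ContinuousAt (fun r => ψ (max r 0)) r
    exact ContinuousAt.comp (hψcontAt _ (le_max_right r 0)) hmax.continuousAt
  have hψteq : ∀ r : ℝ, 0 ≤ r → ψt r = ψ r := fun r hr => by
    simp only [hψtdef, max_eq_left hr]
  have hψnormeq : ∀ x : EuclideanSpace ℝ (Fin d), ψt ‖x‖ = ψ ‖x‖ :=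
    fun x => hψteq _ (norm_nonneg x)
  have hψnormcont : Continuous (fun x : EuclideanSpace ℝ (Fin d) => ψ ‖x‖) := by
    rw [continuous_iff_continuousAt]
    intro x
    exact (hψcontAt _ (norm_nonneg x)).comp continuous_norm.continuousAt
  haveI : Nontrivial (EuclideanSpace ℝ (Fin d)) :=
    Module.nontrivial_of_finrank_pos (R := ℝ)
      (by rw [finrank_euclideanSpace_fin]; omega : 0 < Module.finrank ℝ (EuclideanSpace ℝ (Fin d)))
  -- constants
  set ω : ℝ≥0∞ := (volume : Measure (EuclideanSpace ℝ (Fin d))).toSphere Set.univ with hωdef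
  have hωfin : ω ≠ ⊤ := measure_ne_top _ _
  set C1 : ℝ := 1 / (((d-1:ℕ):ℝ) * κ) with hC1def
  set C2 : ℝ := 1 / (β * κ) with hC2def
  have hC1pos : 0 < C1 := by rw [hC1def, hdc]; positivity
  have hC2pos : 0 < C2 := by rw [hC2def]; positivity
  refine ⟨ω.toReal ^ (1-q) * (C1 ^ (1-q) + C2 ^ (1-q)) + 1, by positivity, fun f g hf hg hgbd => ?_⟩
  set C : ℝ := ω.toReal ^ (1-q) * (C1 ^ (1-q) + C2 ^ (1-q)) + 1 with hCdef
  have hCpos : 0 < C := by positivity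
  set A := ∫⁻ x, f x * g x with hAdef
  set B := ∫⁻ x, ENNReal.ofReal (ψ ‖x‖ ^ lam) * f x * g x with hBdef
  have hae0 : ∀ᵐ x : EuclideanSpace ℝ (Fin d) ∂volume, x ≠ 0 := by
    rw [ae_iff]
    have h0 : (volume : Measure (EuclideanSpace ℝ (Fin d))) {(0:EuclideanSpace ℝ (Fin d))} = 0 :=
      measure_singleton _
    convert h0 using 2
    ext x
    simp
  have hWmeas : Measurable (fun x : EuclideanSpace ℝ (Fin d) => ENNReal.ofReal (ψ ‖x‖ ^ lam)) :=
    (hψnormcont.measurable.pow_const lam).ennreal_ofReal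
  have hW'meas : Measurable (fun x : EuclideanSpace ℝ (Fin d) => ENNReal.ofReal (ψ ‖x‖ ^ (-K))) :=
    (hψnormcont.measurable.pow_const (-K)).ennreal_ofReal
  have hfg0 : A = 0 → (∫⁻ x, f x ^ q * g x) = 0 := by
    intro h0
    have hz : (fun x => f x * g x) =ᵐ[volume] 0 := (lintegral_eq_zero_iff (hf.mul hg)).1 h0
    have hz2 : (fun x => f x ^ q * g x) =ᵐ[volume] 0 := by
      filter_upwards [hz] with x hx
      simp only [Pi.zero_apply] at hx ⊢
      rcases mul_eq_zero.1 hx with h | h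
      · rw [h, ENNReal.zero_rpow_of_pos hq0, zero_mul]
      · rw [h, mul_zero]
    rw [lintegral_congr_ae hz2]
    simp
  by_cases hA0 : A = 0
  · rw [hfg0 hA0]; exact zero_le
  have hB0 : B ≠ 0 := by
    intro h0
    apply hA0
    have hz := (lintegral_eq_zero_iff ((hWmeas.mul hf).mul hg)).1 h0
    have hz2 : (fun x => f x * g x) =ᵐ[volume] 0 := by
      filter_upwards [hz, hae0] with x hx hx0
      simp only [Pi.zero_apply] at hx ⊢
      have hψx : 0 < ψ ‖x‖ := hpos _ (norm_pos_iff.2 hx0)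
      have hw : ENNReal.ofReal (ψ ‖x‖ ^ lam) ≠ 0 := by
        simp only [ne_eq, ENNReal.ofReal_eq_zero, not_le]
        positivity
      rcases mul_eq_zero.1 hx with h | h
      · rcases mul_eq_zero.1 h with h' | h'
        · exact absurd h' hw
        · rw [h', zero_mul]
      · rw [h, mul_zero]
    rw [hAdef, lintegral_congr_ae hz2]
    simp
  have hCne : ENNReal.ofReal C ≠ 0 := by
    simp only [ne_eq, ENNReal.ofReal_eq_zero, not_le]; exact hCpos
  by_cases hAtop : A = ⊤
  · have h1 : A ^ ((1-p)*q) = ⊤ := by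
      rw [hAtop]; exact ENNReal.top_rpow_of_pos (by nlinarith)
    have h2 : B ^ (p*q) ≠ 0 := by
      simp only [ne_eq, ENNReal.rpow_eq_zero_iff, not_or, not_and]
      constructor
      · intro h; exact absurd h hB0
      · intro _; nlinarith
    rw [h1, ENNReal.mul_top hCne, ENNReal.top_mul h2]
    exact le_top
  by_cases hBtop : B = ⊤
  · have h1 : B ^ (p*q) = ⊤ := by
      rw [hBtop]; exact ENNReal.top_rpow_of_pos (by nlinarith)
    have h2 : ENNReal.ofReal C * A ^ ((1-p)*q) ≠ 0 := by
      apply mul_ne_zero hCne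
      simp only [ne_eq, ENNReal.rpow_eq_zero_iff, not_or, not_and]
      constructor
      · intro h; exact absurd h hA0
      · intro _; nlinarith
    rw [h1, ENNReal.mul_top h2]
    exact le_top
  -- MAIN CASE
  set a : ℝ := A.toReal with hadef
  set b : ℝ := B.toReal with hbdef
  have hapos : 0 < a := ENNReal.toReal_pos hA0 hAtop
  have hbpos : 0 < b := ENNReal.toReal_pos hB0 hBtop
  have hAr : A = ENNReal.ofReal a := (ENNReal.ofReal_toReal hAtop).symm
  have hBr : B = ENNReal.ofReal b := (ENNReal.ofReal_toReal hBtop).symm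
  set t : ℝ := (b/a) ^ (q/(K*(1-q))) with htdef
  have ht : 0 < t := Real.rpow_pos_of_pos (div_pos hbpos hapos) _
  obtain ⟨a0, ha0mem, ha0⟩ : ∃ a0 ∈ Icc (0:ℝ) t, ψ a0 = t := by
    have hsub := intermediate_value_Icc (le_of_lt ht)
      (fun r hr => (hψcontAt r hr.1).continuousWithinAt)
    have hmem : t ∈ Icc (ψ 0) (ψ t) := ⟨by rw [hψ0]; exact ht.le, hgeself t ht.le⟩
    obtain ⟨a0, h1, h2⟩ := hsub hmem
    exact ⟨a0, h1, h2⟩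
  have ha0pos : 0 < a0 := by
    rcases eq_or_lt_of_le ha0mem.1 with h | h
    · exfalso; rw [← h, hψ0] at ha0; exact ht.ne ha0
    · exact h
  set U : Set (EuclideanSpace ℝ (Fin d)) := {x | ψt ‖x‖ ≤ t} with hUdef
  have hUmeas : MeasurableSet U :=
    measurableSet_le (hψtcont.comp continuous_norm).measurable measurable_const
  have hSmeas : MeasurableSet {r' : ℝ | ψt r' ≤ t} :=
    measurableSet_le hψtcont.measurable measurable_const
  have hset1 : {r' : ℝ | ψt r' ≤ t} ∩ Ioi 0 = Ioc 0 a0 := by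
    ext r
    simp only [mem_inter_iff, mem_Ioi, mem_setOf_eq, mem_Ioc]
    constructor
    · rintro ⟨hle, hr⟩
      rw [hψteq r hr.le, ← ha0] at hle
      exact ⟨hr, (hsmono.le_iff_le hr.le ha0pos.le).1 hle⟩
    · rintro ⟨hr, hle⟩
      refine ⟨?_, hr⟩
      rw [hψteq r hr.le, ← ha0]
      exact (hsmono.le_iff_le hr.le ha0pos.le).2 hle
  have hset2 : {r' : ℝ | ψt r' ≤ t}ᶜ ∩ Ioi 0 = Ioi a0 := by
    ext r
    simp only [mem_inter_iff, mem_Ioi, mem_compl_iff, mem_setOf_eq, not_le]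
    constructor
    · rintro ⟨hlt, hr⟩
      rw [hψteq r hr.le, ← ha0] at hlt
      exact (hsmono.lt_iff_lt ha0pos.le hr.le).1 hlt
    · intro hr
      have hr0 : 0 < r := ha0pos.trans hr
      refine ⟨?_, hr0⟩
      rw [hψteq r hr0.le, ← ha0]
      exact (hsmono.lt_iff_lt ha0pos.le hr0.le).2 hr
  -- Hoelder machinery
  have hconj : Real.HolderConjugate (1/q) (1/(1-q)) := by
    rw [Real.holderConjugate_iff]
    constructor
    · rw [lt_div_iff₀ hq0]; linarith
    · rw [one_div, one_div, inv_inv, inv_inv]; ring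
  have hHolder : ∀ (ν : Measure (EuclideanSpace ℝ (Fin d)))
      (φ γ : EuclideanSpace ℝ (Fin d) → ℝ≥0∞), Measurable φ → Measurable γ →
      (∫⁻ x, φ x ^ q * γ x ^ (1-q) ∂ν) ≤ (∫⁻ x, φ x ∂ν) ^ q * (∫⁻ x, γ x ∂ν) ^ (1-q) := by
    intro ν φ γ hφ hγ
    have h := ENNReal.lintegral_mul_le_Lp_mul_Lq ν hconj
      ((hφ.pow_const q).aemeasurable) ((hγ.pow_const (1-q)).aemeasurable)
    simp only [Pi.mul_apply] at h
    rw [one_div_one_div, one_div_one_div] at h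
    simp_rw [← ENNReal.rpow_mul, mul_one_div, div_self hq0.ne', div_self hq1'.ne',
      ENNReal.rpow_one] at h
    exact h
  -- bound on ∫_U g
  have hUg : ∫⁻ x in U, g x ∂volume ≤ ω * ENNReal.ofReal (C1 * t ^ (d-1)) := by
    set F1 : ℝ → ℝ≥0∞ := fun r => ({r' : ℝ | ψt r' ≤ t}).indicator
      (fun r' => ENNReal.ofReal ((ψt r' / r') ^ (d-1))) r with hF1def
    have hF1meas : Measurable F1 :=
      (((hψtcont.measurable.div measurable_id).pow_const (d-1)).ennreal_ofReal).indicator hSmeas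
    have step1 : ∫⁻ x in U, g x ∂volume ≤ ∫⁻ x : EuclideanSpace ℝ (Fin d), F1 ‖x‖ := by
      rw [← lintegral_indicator hUmeas]
      apply lintegral_mono_ae
      filter_upwards [hgbd, hae0] with x hgx hx0
      by_cases hxU : x ∈ U
      · rw [indicator_of_mem hxU]
        have hmemS : ‖x‖ ∈ {r' : ℝ | ψt r' ≤ t} := hxU
        show g x ≤ F1 ‖x‖
        rw [hF1def]
        simp only [indicator_of_mem hmemS]
        rw [hψnormeq x]
        exact hgx hx0
      · rw [indicator_of_notMem hxU]; exact zero_le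
    have step2 : ∫⁻ x : EuclideanSpace ℝ (Fin d), F1 ‖x‖
        = ω * ∫⁻ r in Ioi (0:ℝ), ENNReal.ofReal (r^(d-1)) * F1 r :=
      lintegral_norm_polar_s5 d (by omega) F1 hF1meas
    have step3 : ∫⁻ r in Ioi (0:ℝ), ENNReal.ofReal (r^(d-1)) * F1 r
        = ∫⁻ r in Ioc 0 a0, ENNReal.ofReal (ψ r ^ (d-1)) := by
      have heq : ∀ r ∈ Ioi (0:ℝ), ENNReal.ofReal (r^(d-1)) * F1 r
          = ({r' : ℝ | ψt r' ≤ t}).indicator (fun r' => ENNReal.ofReal (ψ r' ^ (d-1))) r := by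
        intro r hr
        rw [hF1def]
        by_cases hrS : r ∈ {r' : ℝ | ψt r' ≤ t}
        · simp only [indicator_of_mem hrS]
          have hr0 : (0:ℝ) < r := hr
          rw [← ENNReal.ofReal_mul (by positivity : (0:ℝ) ≤ r ^ (d-1))]
          congr 1
          rw [hψteq r hr0.le, ← mul_pow]
          congr 1
          rw [mul_comm, div_mul_cancel₀ _ (ne_of_gt hr0)]
        · simp only [indicator_of_notMem hrS, mul_zero]
      rw [setLIntegral_congr_fun measurableSet_Ioi heq,
        lintegral_indicator hSmeas, Measure.restrict_restrict hSmeas, hset1]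
    have step4 : ∫⁻ r in Ioc 0 a0, ENNReal.ofReal (ψ r ^ (d-1))
        ≤ ENNReal.ofReal (C1 * t ^ (d-1)) := by
      have := bound_J1 d hd hκ hψ hψ0 hpos hge1 hsqrt ha0mem.1
      convert this using 2
      rw [ha0, hC1def]
      field_simp
    calc ∫⁻ x in U, g x ∂volume ≤ ∫⁻ x : EuclideanSpace ℝ (Fin d), F1 ‖x‖ := step1
      _ = ω * ∫⁻ r in Ioi (0:ℝ), ENNReal.ofReal (r^(d-1)) * F1 r := step2
      _ = ω * ∫⁻ r in Ioc 0 a0, ENNReal.ofReal (ψ r ^ (d-1)) := by rw [step3]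
      _ ≤ ω * ENNReal.ofReal (C1 * t ^ (d-1)) := mul_le_mul_right step4 _
  -- piece 1
  have hP1 : ∫⁻ x in U, f x ^ q * g x ∂volume
      ≤ A ^ q * (ω * ENNReal.ofReal (C1 * t^(d-1))) ^ (1-q) := by
    have hpt : ∀ x : EuclideanSpace ℝ (Fin d),
        f x ^ q * g x = (f x * g x) ^ q * g x ^ (1-q) := by
      intro x
      rw [ENNReal.mul_rpow_of_nonneg _ _ hq0.le, mul_assoc,
        ← ENNReal.rpow_add_of_nonneg q (1-q) hq0.le hq1'.le,
        show q + (1-q) = 1 from by ring, ENNReal.rpow_one]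
    calc ∫⁻ x in U, f x ^ q * g x ∂volume
        = ∫⁻ x in U, (f x * g x) ^ q * (g x) ^ (1-q) ∂volume := lintegral_congr hpt
      _ ≤ (∫⁻ x in U, f x * g x ∂volume) ^ q * (∫⁻ x in U, g x ∂volume) ^ (1-q) :=
          hHolder _ _ _ (hf.mul hg) hg
      _ ≤ A ^ q * (ω * ENNReal.ofReal (C1 * t^(d-1))) ^ (1-q) := by
          apply mul_le_mul'
          · exact ENNReal.rpow_le_rpow (setLIntegral_le_lintegral _ _) hq0.le
          · exact ENNReal.rpow_le_rpow hUg hq1'.le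
  -- bound on ∫_{Uᶜ} ψ^{-K} g
  have hUc2 : ∫⁻ x in Uᶜ, ENNReal.ofReal (ψ ‖x‖ ^ (-K)) * g x ∂volume
      ≤ ω * ENNReal.ofReal (C2 * t ^ (-β)) := by
    set F2 : ℝ → ℝ≥0∞ := fun r => ({r' : ℝ | ψt r' ≤ t}ᶜ).indicator
      (fun r' => ENNReal.ofReal ((ψt r' / r') ^ (d-1) * ψt r' ^ (-K))) r with hF2def
    have hF2meas : Measurable F2 :=
      ((((hψtcont.measurable.div measurable_id).pow_const (d-1)).mul
        (hψtcont.measurable.pow_const (-K))).ennreal_ofReal).indicator hSmeas.compl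
    have step1 : ∫⁻ x in Uᶜ, ENNReal.ofReal (ψ ‖x‖ ^ (-K)) * g x ∂volume
        ≤ ∫⁻ x : EuclideanSpace ℝ (Fin d), F2 ‖x‖ := by
      rw [← lintegral_indicator hUmeas.compl]
      apply lintegral_mono_ae
      filter_upwards [hgbd, hae0] with x hgx hx0
      by_cases hxU : x ∈ Uᶜ
      · rw [indicator_of_mem hxU]
        have hmemS : ‖x‖ ∈ ({r' : ℝ | ψt r' ≤ t}ᶜ) := hxU
        show ENNReal.ofReal (ψ ‖x‖ ^ (-K)) * g x ≤ F2 ‖x‖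
        rw [hF2def]
        simp only [indicator_of_mem hmemS]
        have hψx : 0 < ψ ‖x‖ := hpos _ (norm_pos_iff.2 hx0)
        rw [hψnormeq x, mul_comm ((ψ ‖x‖ / ‖x‖) ^ (d-1)),
          ENNReal.ofReal_mul (by positivity : (0:ℝ) ≤ ψ ‖x‖ ^ (-K))]
        exact mul_le_mul_right (hgx hx0) _
      · rw [indicator_of_notMem hxU]; exact zero_le
    have step2 : ∫⁻ x : EuclideanSpace ℝ (Fin d), F2 ‖x‖
        = ω * ∫⁻ r in Ioi (0:ℝ), ENNReal.ofReal (r^(d-1)) * F2 r :=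
      lintegral_norm_polar_s5 d (by omega) F2 hF2meas
    have step3 : ∫⁻ r in Ioi (0:ℝ), ENNReal.ofReal (r^(d-1)) * F2 r
        = ∫⁻ r in Ioi a0, ENNReal.ofReal (ψ r ^ (-β)) := by
      have heq : ∀ r ∈ Ioi (0:ℝ), ENNReal.ofReal (r^(d-1)) * F2 r
          = ({r' : ℝ | ψt r' ≤ t}ᶜ).indicator (fun r' => ENNReal.ofReal (ψ r' ^ (-β))) r := by
        intro r hr
        have hr0 : (0:ℝ) < r := hr
        rw [hF2def]
        by_cases hrS : r ∈ ({r' : ℝ | ψt r' ≤ t}ᶜ)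
        · simp only [indicator_of_mem hrS]
          have hψr : 0 < ψ r := hpos r hr0
          rw [hψteq r hr0.le, ← ENNReal.ofReal_mul (by positivity : (0:ℝ) ≤ r ^ (d-1))]
          congr 1
          rw [← mul_assoc, ← mul_pow, mul_comm r, div_mul_cancel₀ _ (ne_of_gt hr0),
            ← Real.rpow_natCast (ψ r) (d-1), ← Real.rpow_add hψr, hdc]
          congr 1
          rw [hβdef]; ring
        · simp only [indicator_of_notMem hrS, mul_zero]
      rw [setLIntegral_congr_fun measurableSet_Ioi heq,
        lintegral_indicator hSmeas.compl, Measure.restrict_restrict hSmeas.compl, hset2]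
    have step4 : ∫⁻ r in Ioi a0, ENNReal.ofReal (ψ r ^ (-β))
        ≤ ENNReal.ofReal (C2 * t ^ (-β)) := by
      have := bound_J2 hβ0 hκ hψ hpos hgeself hsqrt ha0pos
      convert this using 2
      rw [ha0, hC2def]
      field_simp
    calc ∫⁻ x in Uᶜ, ENNReal.ofReal (ψ ‖x‖ ^ (-K)) * g x ∂volume
        ≤ ∫⁻ x : EuclideanSpace ℝ (Fin d), F2 ‖x‖ := step1
      _ = ω * ∫⁻ r in Ioi (0:ℝ), ENNReal.ofReal (r^(d-1)) * F2 r := step2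
      _ = ω * ∫⁻ r in Ioi a0, ENNReal.ofReal (ψ r ^ (-β)) := by rw [step3]
      _ ≤ ω * ENNReal.ofReal (C2 * t ^ (-β)) := mul_le_mul_right step4 _
  -- piece 2
  have hP2 : ∫⁻ x in Uᶜ, f x ^ q * g x ∂volume
      ≤ B ^ q * (ω * ENNReal.ofReal (C2 * t^(-β))) ^ (1-q) := by
    have hpt2 : ∀ᵐ x : EuclideanSpace ℝ (Fin d) ∂volume,
        f x ^ q * g x = (ENNReal.ofReal (ψ ‖x‖ ^ lam) * f x * g x) ^ q *
          (ENNReal.ofReal (ψ ‖x‖ ^ (-K)) * g x) ^ (1-q) := by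
      filter_upwards [hae0] with x hx0
      have hψx : 0 < ψ ‖x‖ := hpos _ (norm_pos_iff.2 hx0)
      rw [ENNReal.mul_rpow_of_nonneg _ _ hq0.le,
          ENNReal.mul_rpow_of_nonneg _ _ hq0.le,
          ENNReal.mul_rpow_of_nonneg _ _ hq1'.le,
          ENNReal.ofReal_rpow_of_pos (by positivity),
          ENNReal.ofReal_rpow_of_pos (by positivity),
          ← Real.rpow_mul hψx.le, ← Real.rpow_mul hψx.le]
      have hKq : -K * (1-q) = -(lam * q) := by
        rw [hKdef]; field_simp
      rw [hKq]
      have hW : ENNReal.ofReal (ψ ‖x‖ ^ (lam*q)) * ENNReal.ofReal (ψ ‖x‖ ^ (-(lam*q))) = 1 := by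
        rw [← ENNReal.ofReal_mul (by positivity), ← Real.rpow_add hψx]
        norm_num
      have hg2 : g x ^ q * g x ^ (1-q) = g x := by
        rw [← ENNReal.rpow_add_of_nonneg q (1-q) hq0.le hq1'.le,
          show q + (1-q) = 1 from by ring, ENNReal.rpow_one]
      calc f x ^ q * g x
          = (ENNReal.ofReal (ψ ‖x‖ ^ (lam*q)) * ENNReal.ofReal (ψ ‖x‖ ^ (-(lam*q)))) *
            (f x ^ q * (g x ^ q * g x ^ (1-q))) := by rw [hW, hg2, one_mul]
        _ = ENNReal.ofReal (ψ ‖x‖ ^ (lam*q)) * f x ^ q * g x ^ q *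
            (ENNReal.ofReal (ψ ‖x‖ ^ (-(lam*q))) * g x ^ (1-q)) := by ring
    calc ∫⁻ x in Uᶜ, f x ^ q * g x ∂volume
        = ∫⁻ x in Uᶜ, (ENNReal.ofReal (ψ ‖x‖ ^ lam) * f x * g x) ^ q *
            (ENNReal.ofReal (ψ ‖x‖ ^ (-K)) * g x) ^ (1-q) ∂volume :=
          lintegral_congr_ae (ae_restrict_of_ae hpt2)
      _ ≤ (∫⁻ x in Uᶜ, ENNReal.ofReal (ψ ‖x‖ ^ lam) * f x * g x ∂volume) ^ q *
            (∫⁻ x in Uᶜ, ENNReal.ofReal (ψ ‖x‖ ^ (-K)) * g x ∂volume) ^ (1-q) :=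
          hHolder _ _ _ ((hWmeas.mul hf).mul hg) (hW'meas.mul hg)
      _ ≤ B ^ q * (ω * ENNReal.ofReal (C2 * t^(-β))) ^ (1-q) := by
          apply mul_le_mul'
          · exact ENNReal.rpow_le_rpow (setLIntegral_le_lintegral _ _) hq0.le
          · exact ENNReal.rpow_le_rpow hUc2 hq1'.le
  -- final combination
  have hsum : ∫⁻ x, f x ^ q * g x
      ≤ A ^ q * (ω * ENNReal.ofReal (C1 * t^(d-1))) ^ (1-q)
        + B ^ q * (ω * ENNReal.ofReal (C2 * t^(-β))) ^ (1-q) := by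
    rw [← lintegral_add_compl (fun x => f x ^ q * g x) hUmeas]
    exact add_le_add hP1 hP2
  have h1nn : (0:ℝ) ≤ a ^ q * (C1 * t^(d-1)) ^ (1-q) :=
    mul_nonneg (Real.rpow_nonneg hapos.le q)
      (Real.rpow_nonneg (mul_nonneg hC1pos.le (pow_nonneg ht.le _)) _)
  have h2nn : (0:ℝ) ≤ b ^ q * (C2 * t^(-β)) ^ (1-q) :=
    mul_nonneg (Real.rpow_nonneg hbpos.le q)
      (Real.rpow_nonneg (mul_nonneg hC2pos.le (Real.rpow_nonneg ht.le _)) _)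
  have hterm1 : A ^ q * (ω * ENNReal.ofReal (C1 * t^(d-1))) ^ (1-q)
      = ω ^ (1-q) * ENNReal.ofReal (a ^ q * (C1 * t^(d-1)) ^ (1-q)) := by
    rw [ENNReal.mul_rpow_of_nonneg _ _ hq1'.le, hAr,
      ENNReal.ofReal_rpow_of_pos hapos,
      ENNReal.ofReal_rpow_of_pos (mul_pos hC1pos (pow_pos ht _)),
      ENNReal.ofReal_mul (Real.rpow_nonneg hapos.le q)]
    ring
  have hterm2 : B ^ q * (ω * ENNReal.ofReal (C2 * t^(-β))) ^ (1-q)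
      = ω ^ (1-q) * ENNReal.ofReal (b ^ q * (C2 * t^(-β)) ^ (1-q)) := by
    rw [ENNReal.mul_rpow_of_nonneg _ _ hq1'.le, hBr,
      ENNReal.ofReal_rpow_of_pos hbpos,
      ENNReal.ofReal_rpow_of_pos (mul_pos hC2pos (Real.rpow_pos_of_pos ht _)),
      ENNReal.ofReal_mul (Real.rpow_nonneg hbpos.le q)]
    ring
  have hreal : a ^ q * (C1 * t^(d-1)) ^ (1-q) + b ^ q * (C2 * t^(-β)) ^ (1-q)
      = (C1^(1-q) + C2^(1-q)) * (a ^ ((1-p)*q) * b ^ (p*q)) := by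
    have hnat : t ^ (d-1) = t ^ (((d:ℝ)) - 1) := by
      rw [← Real.rpow_natCast t (d-1), hdc]
    rw [hnat, hβdef]
    exact real_opt hapos hbpos hq0 hq1 hK0 hd1 hC1pos.le hC2pos.le hp'
  have hωr : ω ^ (1-q) = ENNReal.ofReal (ω.toReal ^ (1-q)) := by
    rw [ENNReal.toReal_rpow, ENNReal.ofReal_toReal (ENNReal.rpow_ne_top_of_nonneg hq1'.le hωfin)]
  have hCsum_nn : (0:ℝ) ≤ (C1^(1-q) + C2^(1-q)) * (a ^ ((1-p)*q) * b ^ (p*q)) := by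
    apply mul_nonneg
    · exact add_nonneg (Real.rpow_nonneg hC1pos.le _) (Real.rpow_nonneg hC2pos.le _)
    · exact mul_nonneg (Real.rpow_nonneg hapos.le _) (Real.rpow_nonneg hbpos.le _)
  calc ∫⁻ x, f x ^ q * g x
      ≤ A ^ q * (ω * ENNReal.ofReal (C1 * t^(d-1))) ^ (1-q)
        + B ^ q * (ω * ENNReal.ofReal (C2 * t^(-β))) ^ (1-q) := hsum
    _ = ω ^ (1-q) * ENNReal.ofReal ((C1^(1-q) + C2^(1-q)) * (a ^ ((1-p)*q) * b ^ (p*q))) := by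
        rw [hterm1, hterm2, ← mul_add, ← ENNReal.ofReal_add h1nn h2nn, hreal]
    _ = ENNReal.ofReal (ω.toReal ^ (1-q) * (C1^(1-q) + C2^(1-q)))
          * ENNReal.ofReal (a ^ ((1-p)*q) * b ^ (p*q)) := by
        rw [hωr, ← ENNReal.ofReal_mul (Real.rpow_nonneg ENNReal.toReal_nonneg _),
          ← ENNReal.ofReal_mul (mul_nonneg (Real.rpow_nonneg ENNReal.toReal_nonneg _)
            (add_nonneg (Real.rpow_nonneg hC1pos.le _) (Real.rpow_nonneg hC2pos.le _))),
          mul_assoc]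
    _ ≤ ENNReal.ofReal C * ENNReal.ofReal (a ^ ((1-p)*q) * b ^ (p*q)) := by
        apply mul_le_mul_left
        apply ENNReal.ofReal_le_ofReal
        rw [hCdef]
        linarith
    _ = ENNReal.ofReal C * A ^ ((1-p)*q) * B ^ (p*q) := by
        rw [ENNReal.ofReal_mul (Real.rpow_nonneg hapos.le _),
          ← ENNReal.ofReal_rpow_of_pos hapos, ← ENNReal.ofReal_rpow_of_pos hbpos,
          ← hAr, ← hBr, ← mul_assoc]
end

section
/- Let d ≥ 1 be an integer, let ν be a Borel probability measure on ℝ^d with ∫ ‖u‖ dν(u) < ∞ and ∫ u dν(u) = 0 (Bochner integral), let D : ℝ^d × ℝ^d → [0,∞) be a Borel measurable function with D(u,v) ≥ ‖u−v‖ for all u, v ∈ ℝ^d, and let H : [0,∞) → [0,∞) be a non-decreasing convex function. Then ∬_{ℝ^d×ℝ^d} H(D(u,v)) dν(u) dν(v) ≥ ∫_{ℝ^d} H(‖u‖) dν(u), where the integrals take values in [0,∞]. -/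
open Real Filter Set MeasureTheory
open scoped ENNReal

/-- Supporting line for a monotone convex function on `[0,∞)`. -/
lemma support_line_aux (H : ℝ → ℝ) (hHmono : MonotoneOn H (Set.Ici 0))
    (hHconv : ConvexOn ℝ (Set.Ici 0) H) (m : ℝ) (hm : 0 ≤ m) :
    ∃ c : ℝ, 0 ≤ c ∧ ∀ x ≥ (0:ℝ), H m + c * (x - m) ≤ H x := by
  rcases eq_or_lt_of_le hm with h0 | hm0
  · exact ⟨0, le_refl 0, fun x hx => by
      simpa [← h0] using hHmono (le_refl (0:ℝ)) hx hx⟩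
  · set S : Set ℝ := (fun x => (H m - H x) / (m - x)) '' (Set.Ico 0 m) with hS
    have hne : S.Nonempty := ⟨_, ⟨0, ⟨le_refl 0, hm0⟩, rfl⟩⟩
    have hub : ∀ y ∈ Set.Ioi m, ∀ z ∈ S, z ≤ (H y - H m) / (y - m) := by
      rintro y hy z ⟨x, hx, rfl⟩
      exact hHconv.slope_mono_adjacent hx.1 (hm.trans (le_of_lt hy)) hx.2 hy
    have hbdd : BddAbove S := ⟨(H (m+1) - H m) / (m + 1 - m),
      fun z hz => hub (m+1) (by simp) z hz⟩
    refine ⟨sSup S, ?_, ?_⟩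
    · have h0 : (H m - H 0) / (m - 0) ∈ S := ⟨0, ⟨le_refl 0, hm0⟩, rfl⟩
      have hnn : 0 ≤ (H m - H 0) / (m - 0) := by
        have := hHmono (le_refl (0:ℝ)) hm hm
        apply div_nonneg <;> linarith
      exact hnn.trans (le_csSup hbdd h0)
    · intro x hx
      rcases lt_trichotomy x m with hlt | heq | hgt
      · have hle : (H m - H x) / (m - x) ≤ sSup S :=
          le_csSup hbdd ⟨x, ⟨hx, hlt⟩, rfl⟩
        have hpos : 0 < m - x := by linarith
        rw [div_le_iff₀ hpos] at hle
        nlinarith [hle]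
      · simp [heq]
      · have hle : sSup S ≤ (H x - H m) / (x - m) :=
          csSup_le hne (hub x hgt)
        have hpos : 0 < x - m := by linarith
        rw [le_div_iff₀ hpos] at hle
        nlinarith [hle]

/-- Proposition 4.1 (tangent-space form): if `ν` is a probability measure on `ℝ^d` with
finite first moment and vanishing Bochner mean, `D(u,v) ≥ ‖u-v‖`, and `H` is a
non-decreasing convex function `[0,∞) → [0,∞)`, then
`∬ H(D(u,v)) dν dν ≥ ∫ H(‖u‖) dν`. -/
theorem stmt8 (d : ℕ) (hd : 1 ≤ d)
    (ν : Measure (EuclideanSpace ℝ (Fin d))) [IsProbabilityMeasure ν]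
    (hmom : Integrable (fun u => ‖u‖) ν)
    (hcm : ∫ u, u ∂ν = 0)
    (D : EuclideanSpace ℝ (Fin d) → EuclideanSpace ℝ (Fin d) → ℝ)
    (hDmeas : Measurable (Function.uncurry D))
    (hDnonneg : ∀ u v, 0 ≤ D u v)
    (hD : ∀ u v, ‖u - v‖ ≤ D u v)
    (H : ℝ → ℝ)
    (hHmono : MonotoneOn H (Set.Ici 0))
    (hHconv : ConvexOn ℝ (Set.Ici 0) H)
    (hHnonneg : ∀ θ ≥ (0:ℝ), 0 ≤ H θ) :
    ∫⁻ u, ENNReal.ofReal (H ‖u‖) ∂ν ≤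
      ∫⁻ u, ∫⁻ v, ENNReal.ofReal (H (D u v)) ∂ν ∂ν := by
  have step1 : ∀ u, (∫⁻ v, ENNReal.ofReal (H ‖u - v‖) ∂ν) ≤
      ∫⁻ v, ENNReal.ofReal (H (D u v)) ∂ν := by
    intro u
    refine lintegral_mono fun v => ENNReal.ofReal_le_ofReal ?_
    exact hHmono (norm_nonneg _) ((norm_nonneg _).trans (hD u v)) (hD u v)
  refine le_trans (lintegral_mono fun u => ?_) (lintegral_mono fun u => step1 u)
  -- key pointwise step: ofReal (H ‖u‖) ≤ ∫⁻ v, ofReal (H ‖u - v‖)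
  have hid : Integrable (fun v : EuclideanSpace ℝ (Fin d) => v) ν :=
    (integrable_norm_iff aestronglyMeasurable_id).1 hmom
  set f : EuclideanSpace ℝ (Fin d) → ℝ := fun v => ‖u - v‖ with hf
  have hfint : Integrable f ν := ((integrable_const u).sub hid).norm
  -- measurability of v ↦ H (f v)
  have hHt : Monotone (fun x : ℝ => H (max x 0)) := by
    intro a b hab
    exact hHmono (le_max_right a 0) (le_max_right b 0) (max_le_max hab le_rfl)
  have hgmeas : Measurable fun v => H (f v) := by
    have : (fun v => H (f v)) = (fun x : ℝ => H (max x 0)) ∘ f := by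
      funext v; simp [max_eq_left (norm_nonneg _), Function.comp]
      exact (congrArg H (max_eq_left (norm_nonneg (u - v)))).symm
    rw [this]
    exact hHt.measurable.comp ((measurable_const.sub measurable_id).norm)
  by_cases hfin : (∫⁻ v, ENNReal.ofReal (H (f v)) ∂ν) = ∞
  · simp [show (∫⁻ v, ENNReal.ofReal (H ‖u - v‖) ∂ν) = ∞ from hfin]
  · have hnn : 0 ≤ᵐ[ν] fun v => H (f v) :=
      Filter.Eventually.of_forall fun v => hHnonneg _ (norm_nonneg _)
    have hgint : Integrable (fun v => H (f v)) ν :=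
      ⟨hgmeas.aestronglyMeasurable,
        (hasFiniteIntegral_iff_ofReal hnn).2 (lt_top_iff_ne_top.2 hfin)⟩
    rw [← ofReal_integral_eq_lintegral_ofReal hgint hnn]
    refine ENNReal.ofReal_le_ofReal ?_
    -- Jensen via supporting line
    obtain ⟨c, hc0, hline⟩ := support_line_aux H hHmono hHconv ‖u‖ (norm_nonneg u)
    have hmean : ‖u‖ ≤ ∫ v, f v ∂ν := by
      have h1 : ∫ v, (u - v) ∂ν = u := by
        rw [integral_sub (integrable_const u) hid, hcm, sub_zero,
          integral_const, probReal_univ, one_smul]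
      calc ‖u‖ = ‖∫ v, (u - v) ∂ν‖ := by rw [h1]
        _ ≤ ∫ v, ‖u - v‖ ∂ν := norm_integral_le_integral_norm _
    have haux : Integrable (fun v => H ‖u‖ + c * (f v - ‖u‖)) ν :=
      (integrable_const _).add (((hfint.sub (integrable_const _)).const_mul c))
    have hmono2 : ∫ v, (H ‖u‖ + c * (f v - ‖u‖)) ∂ν ≤ ∫ v, H (f v) ∂ν :=
      integral_mono haux hgint fun v => hline (f v) (norm_nonneg _)
    have h1 : Integrable (fun v => c * (f v - ‖u‖)) ν :=
      (hfint.sub (integrable_const _)).const_mul c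
    have heval : ∫ v, (H ‖u‖ + c * (f v - ‖u‖)) ∂ν
        = H ‖u‖ + c * ((∫ v, f v ∂ν) - ‖u‖) := by
      have h2 := integral_add (μ := ν) (integrable_const (H ‖u‖)) h1
      rw [h2, integral_const, probReal_univ, one_smul,
        integral_const_mul, integral_sub hfint (integrable_const _),
        integral_const, probReal_univ, one_smul]
    nlinarith [hmono2, heval, mul_nonneg hc0 (sub_nonneg.2 hmean)]
end

section
/- Let d ≥ 1 be an integer, let μ be a finite nonnegative Borel measure on ℝ^d with 0 < μ(ℝ^d) < ∞, ∫ ‖u‖ dμ(u) < ∞ and ∫ u dμ(u) = 0 (Bochner integral), let D : ℝ^d × ℝ^d → [0,∞) be a Borel measurable function with D(u,v) ≥ ‖u−v‖ for all u, v ∈ ℝ^d, and let H : [0,∞) → [0,∞) be a non-decreasing convex function. Then ∬_{ℝ^d×ℝ^d} H(D(u,v)) dμ(u) dμ(v) ≥ (∫_{ℝ^d} H(‖u‖) dμ(u)) · μ(ℝ^d), where the integrals take values in [0,∞]. -/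
open Real Filter Set MeasureTheory
open scoped ENNReal

/-- Remark 4.1 (tangent-space form): if `μ` is a finite nonnegative measure on `ℝ^d` with
`0 < μ(ℝ^d) < ∞`, finite first moment and vanishing Bochner mean, `D(u,v) ≥ ‖u-v‖`, and
`H` is a non-decreasing convex function `[0,∞) → [0,∞)`, then
`∬ H(D(u,v)) dμ dμ ≥ (∫ H(‖u‖) dμ) · μ(ℝ^d)`. -/
theorem stmt9 (d : ℕ) (hd : 1 ≤ d)
    (μ : Measure (EuclideanSpace ℝ (Fin d)))
    (hμpos : 0 < μ Set.univ) (hμfin : μ Set.univ < ⊤)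
    (hmom : Integrable (fun u => ‖u‖) μ)
    (hcm : ∫ u, u ∂μ = 0)
    (D : EuclideanSpace ℝ (Fin d) → EuclideanSpace ℝ (Fin d) → ℝ)
    (hDmeas : Measurable (Function.uncurry D))
    (hDnonneg : ∀ u v, 0 ≤ D u v)
    (hD : ∀ u v, ‖u - v‖ ≤ D u v)
    (H : ℝ → ℝ)
    (hHmono : MonotoneOn H (Set.Ici 0))
    (hHconv : ConvexOn ℝ (Set.Ici 0) H)
    (hHnonneg : ∀ θ ≥ (0:ℝ), 0 ≤ H θ) :
    (∫⁻ u, ENNReal.ofReal (H ‖u‖) ∂μ) * μ Set.univ ≤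
      ∫⁻ u, ∫⁻ v, ENNReal.ofReal (H (D u v)) ∂μ ∂μ := by
  haveI : IsFiniteMeasure μ := ⟨hμfin⟩
  haveI : NeZero μ := ⟨Measure.measure_univ_ne_zero.mp hμpos.ne'⟩
  set g : EuclideanSpace ℝ (Fin d) → ℝ := fun w => H ‖w‖ with hg_def
  have hgconv : ConvexOn ℝ (Set.univ : Set (EuclideanSpace ℝ (Fin d))) g := by
    refine ⟨convex_univ, fun x _ y _ a b ha hb hab => ?_⟩
    have h1 : ‖a • x + b • y‖ ≤ a * ‖x‖ + b * ‖y‖ := by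
      calc ‖a • x + b • y‖ ≤ ‖a • x‖ + ‖b • y‖ := norm_add_le _ _
        _ = a * ‖x‖ + b * ‖y‖ := by
            rw [norm_smul, norm_smul, Real.norm_of_nonneg ha, Real.norm_of_nonneg hb]
    have h2 : H ‖a • x + b • y‖ ≤ H (a * ‖x‖ + b * ‖y‖) :=
      hHmono (Set.mem_Ici.mpr (norm_nonneg _)) (Set.mem_Ici.mpr (by positivity)) h1
    have h3 := hHconv.2 (Set.mem_Ici.mpr (norm_nonneg x)) (Set.mem_Ici.mpr (norm_nonneg y))
      ha hb hab
    simpa [smul_eq_mul] using h2.trans h3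
  have hgcont : Continuous g := by
    rw [← continuousOn_univ]
    exact hgconv.continuousOn isOpen_univ
  have hgnonneg : ∀ w : EuclideanSpace ℝ (Fin d), 0 ≤ g w := fun w => hHnonneg _ (norm_nonneg w)
  have hid : Integrable (fun v : EuclideanSpace ℝ (Fin d) => v) μ :=
    hmom.mono' aestronglyMeasurable_id (Filter.Eventually.of_forall fun v => le_of_eq rfl)
  have htR : (μ Set.univ).toReal ≠ 0 := by
    simp [ENNReal.toReal_ne_zero, hμpos.ne', hμfin.ne]
  -- step 2
  have step2 : ∀ u : EuclideanSpace ℝ (Fin d), ENNReal.ofReal (g u) * μ Set.univ ≤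
      ∫⁻ v, ENNReal.ofReal (g (u - v)) ∂μ := by
    intro u
    by_cases hint : Integrable (fun v => g (u - v)) μ
    · have hfi : Integrable (fun v : EuclideanSpace ℝ (Fin d) => u - v) μ := (integrable_const u).sub hid
      have hav : (⨍ v, (u - v) ∂μ) = u := by
        rw [average_eq, integral_sub (integrable_const u) hid, hcm, integral_const, sub_zero,
          smul_smul, measureReal_def, inv_mul_cancel₀ htR, one_smul]
      have hjen := hgconv.map_average_le (hgconv.continuousOn isOpen_univ) isClosed_univ
        (Filter.Eventually.of_forall fun v => Set.mem_univ _) hfi hint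
      rw [hav, average_eq] at hjen
      have hInonneg : 0 ≤ ∫ v, g (u - v) ∂μ := integral_nonneg fun v => hgnonneg _
      have h1 : ENNReal.ofReal (g u) * μ Set.univ ≤
          ENNReal.ofReal ((μ Set.univ).toReal⁻¹ * ∫ v, g (u - v) ∂μ) * μ Set.univ := by
        gcongr
        rw [measureReal_def, smul_eq_mul] at hjen
        exact hjen
      refine h1.trans ?_
      have heq : ENNReal.ofReal ((μ Set.univ).toReal⁻¹ * ∫ v, g (u - v) ∂μ) * μ Set.univ
          = ENNReal.ofReal (∫ v, g (u - v) ∂μ) := by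
        rw [← ENNReal.ofReal_toReal hμfin.ne, ← ENNReal.ofReal_mul (by positivity)]
        congr 1
        rw [ENNReal.toReal_ofReal ENNReal.toReal_nonneg]
        field_simp
      rw [heq]
      exact le_of_eq (ofReal_integral_eq_lintegral_ofReal hint
        (Filter.Eventually.of_forall fun v => hgnonneg _))
    · have hasm : AEStronglyMeasurable (fun v => g (u - v)) μ :=
        (hgcont.comp (continuous_const.sub continuous_id)).aestronglyMeasurable
      have hT : ∫⁻ v, ENNReal.ofReal (g (u - v)) ∂μ = ⊤ := by
        by_contra h
        exact hint ⟨hasm, by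
          rw [HasFiniteIntegral]
          simpa [Real.enorm_eq_ofReal (hgnonneg _)] using Ne.lt_top h⟩
      simp [hT]
  calc (∫⁻ u, ENNReal.ofReal (H ‖u‖) ∂μ) * μ Set.univ
      = ∫⁻ u, ENNReal.ofReal (g u) * μ Set.univ ∂μ :=
        (lintegral_mul_const _ (ENNReal.measurable_ofReal.comp hgcont.measurable)).symm
    _ ≤ ∫⁻ u, ∫⁻ v, ENNReal.ofReal (g (u - v)) ∂μ ∂μ := lintegral_mono step2
    _ ≤ ∫⁻ u, ∫⁻ v, ENNReal.ofReal (H (D u v)) ∂μ ∂μ := by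
        refine lintegral_mono fun u => lintegral_mono fun v => ?_
        exact ENNReal.ofReal_le_ofReal
          (hHmono (Set.mem_Ici.mpr (norm_nonneg _)) (Set.mem_Ici.mpr (hDnonneg u v)) (hD u v))
end

section
/- Let d ≥ 2 be an integer, c > 0, 0 < q < 1, a > 0, and let h : [0,∞) → ℝ be a function satisfying lim_{θ→∞} h(θ)/exp((√c·(d−1)·(1−q)/2)·θ) = 0. Then lim_{R→∞} [ −(1/(1−q)) · (a·∫₀^R (sinh(√c·θ)/√c)^{d−1} dθ)^{1−q} + h(2R)/2 ] = −∞. -/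
open Real Filter MeasureTheory Topology

/-- Analytic core of Theorem 3.1 (nonexistence by spreading): if `h` grows slower than
`exp(√c(d-1)(1-q)θ/2)` at infinity, then the energy upper bound
`-(1/(1-q))(a∫₀^R(sinh(√c θ)/√c)^{d-1}dθ)^{1-q} + h(2R)/2` tends to `-∞` as `R → ∞`. -/
theorem stmt12 (d : ℕ) (hd : 2 ≤ d) (c q a : ℝ) (hc : 0 < c)
    (hq0 : 0 < q) (hq1 : q < 1) (ha : 0 < a)
    (h : ℝ → ℝ)
    (hh : Tendsto (fun θ => h θ / Real.exp (Real.sqrt c * ((d:ℝ) - 1) * (1 - q) / 2 * θ))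
      atTop (𝓝 0)) :
    Tendsto (fun R : ℝ =>
        -(1 / (1 - q)) *
            (a * ∫ θ in (0:ℝ)..R, (Real.sinh (Real.sqrt c * θ) / Real.sqrt c) ^ (d - 1))
              ^ (1 - q)
          + h (2 * R) / 2)
      atTop atBot := by
  set s := Real.sqrt c with hs
  have hs0 : 0 < s := Real.sqrt_pos.mpr hc
  have hd1 : (1:ℝ) ≤ (d:ℝ) - 1 := by
    have : (2:ℝ) ≤ (d:ℝ) := by exact_mod_cast hd
    linarith
  set α := s * ((d:ℝ) - 1) with hα
  have hα0 : 0 < α := by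
    have : (0:ℝ) < (d:ℝ) - 1 := by linarith
    positivity
  have h1q : 0 < 1 - q := by linarith
  set A : ℝ := a / ((4*s)^(d-1) * Real.exp α) with hA
  have hA0 : 0 < A := by positivity
  set C : ℝ := A ^ (1-q) / (1-q) with hC
  have hC0 : 0 < C := by
    have : (0:ℝ) < A ^ (1-q) := Real.rpow_pos_of_pos hA0 _
    positivity
  set u : ℝ → ℝ := fun θ => h θ / Real.exp (s * ((d:ℝ) - 1) * (1 - q) / 2 * θ) with hu
  have hu0 : Tendsto (fun R => u (2*R)) atTop (𝓝 0) := by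
    exact hh.comp (Tendsto.const_mul_atTop two_pos tendsto_id)
  -- the dominating function
  have hglim : Tendsto (fun R => Real.exp (α*(1-q)*R) * (u (2*R)/2 - C)) atTop atBot := by
    apply Filter.Tendsto.atTop_mul_neg (C := 0/2 - C)
    · have : (0:ℝ)/2 - C = -C := by ring
      rw [this]; linarith
    · exact Real.tendsto_exp_atTop.comp (Tendsto.const_mul_atTop (by positivity) tendsto_id)
    · exact (hu0.div_const 2).sub_const C
  apply tendsto_atBot_mono' atTop _ hglim
  have hcast : ((d - 1 : ℕ) : ℝ) = (d:ℝ) - 1 := by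
    have : 1 ≤ d := by omega
    push_cast [this]; ring
  filter_upwards [eventually_ge_atTop (max 1 (Real.log 2 / s + 1))] with R hR
  have hR1 : (1:ℝ) ≤ R := le_trans (le_max_left _ _) hR
  have hR2 : Real.log 2 ≤ s * (R - 1) := by
    have := le_trans (le_max_right _ _) hR
    have h' : Real.log 2 / s ≤ R - 1 := by linarith
    calc Real.log 2 = s * (Real.log 2 / s) := by field_simp
    _ ≤ s * (R - 1) := by nlinarith
  set F : ℝ → ℝ := fun θ => (Real.sinh (s * θ) / s) ^ (d - 1) with hF
  have hFc : Continuous F := by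
    apply Continuous.pow
    exact (Real.continuous_sinh.comp (continuous_const.mul continuous_id)).div_const s
  have hFnonneg : ∀ θ, 0 ≤ θ → 0 ≤ F θ := fun θ hθ => by
    apply pow_nonneg
    exact div_nonneg (Real.sinh_nonneg_iff.mpr (by positivity)) hs0.le
  -- lower bound on the integral
  have hVlow : A * Real.exp (α * R) ≤ a * ∫ θ in (0:ℝ)..R, F θ := by
    have hi1 : IntervalIntegrable F volume 0 (R-1) := hFc.intervalIntegrable _ _
    have hi2 : IntervalIntegrable F volume (R-1) R := hFc.intervalIntegrable _ _
    have hsplit : (∫ θ in (0:ℝ)..R, F θ)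
        = (∫ θ in (0:ℝ)..(R-1), F θ) + ∫ θ in (R-1)..R, F θ :=
      (intervalIntegral.integral_add_adjacent_intervals hi1 hi2).symm
    have h1 : 0 ≤ ∫ θ in (0:ℝ)..(R-1), F θ :=
      intervalIntegral.integral_nonneg (by linarith)
        (fun θ hθ => hFnonneg θ hθ.1)
    have h2 : F (R-1) ≤ ∫ θ in (R-1)..R, F θ := by
      have hmono : ∀ θ ∈ Set.Icc (R-1) R, F (R-1) ≤ F θ := by
        intro θ hθ
        apply pow_le_pow_left₀
          (div_nonneg (Real.sinh_nonneg_iff.mpr (by nlinarith [hθ.1])) hs0.le)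
        apply div_le_div_of_nonneg_right ?_ hs0.le
        exact Real.sinh_le_sinh.mpr (by nlinarith [hθ.1])
      have := intervalIntegral.integral_mono_on (by linarith : R - 1 ≤ R)
        (intervalIntegrable_const (c := F (R-1))) hi2 hmono
      simpa using this
    have hFR1 : Real.exp (α * (R-1)) / (4*s)^(d-1) ≤ F (R-1) := by
      have hsinh : Real.exp (s*(R-1)) / 4 ≤ Real.sinh (s*(R-1)) := by
        have h2le : (2:ℝ) ≤ Real.exp (s*(R-1)) := by
          calc (2:ℝ) = Real.exp (Real.log 2) := (Real.exp_log two_pos).symm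
          _ ≤ Real.exp (s*(R-1)) := Real.exp_le_exp.mpr hR2
        have hinv : Real.exp (-(s*(R-1))) ≤ Real.exp (s*(R-1)) / 2 := by
          rw [Real.exp_neg]
          rw [inv_le_iff_one_le_mul₀ (Real.exp_pos _)] at *
          nlinarith [Real.exp_pos (s*(R-1))]
        rw [Real.sinh_eq]
        linarith
      calc Real.exp (α * (R-1)) / (4*s)^(d-1)
          = (Real.exp (s*(R-1)) / 4 / s)^(d-1) := by
            rw [div_pow, div_pow, mul_pow, ← Real.exp_nat_mul, hcast]
            rw [div_div]
            congr 1
            rw [hα]; ring_nf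
      _ ≤ F (R-1) := by
            apply pow_le_pow_left₀ (by positivity)
            exact div_le_div_of_nonneg_right hsinh hs0.le
    have hAeq : A * Real.exp (α * R) = a * (Real.exp (α * (R-1)) / (4*s)^(d-1)) := by
      rw [hA, show α * (R-1) = α * R - α by ring, Real.exp_sub]
      field_simp
    calc A * Real.exp (α * R) = a * (Real.exp (α * (R-1)) / (4*s)^(d-1)) := hAeq
    _ ≤ a * F (R-1) := mul_le_mul_of_nonneg_left hFR1 ha.le
    _ ≤ a * ∫ θ in (0:ℝ)..R, F θ := by
          rw [hsplit]; exact mul_le_mul_of_nonneg_left (by linarith) ha.le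
  -- rpow step
  have hVpow : A ^ (1-q) * Real.exp (α*(1-q)*R)
      ≤ (a * ∫ θ in (0:ℝ)..R, F θ) ^ (1-q) := by
    have h1 : (A * Real.exp (α*R)) ^ (1-q) ≤ (a * ∫ θ in (0:ℝ)..R, F θ) ^ (1-q) :=
      Real.rpow_le_rpow (by positivity) hVlow h1q.le
    calc A ^ (1-q) * Real.exp (α*(1-q)*R)
        = (A * Real.exp (α*R)) ^ (1-q) := by
          rw [Real.mul_rpow hA0.le (Real.exp_pos _).le, ← Real.exp_mul]
          ring_nf
    _ ≤ _ := h1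
  -- assemble
  have hhval : h (2*R) = u (2*R) * Real.exp (α*(1-q)*R) := by
    have : α*(1-q)*R = s * ((d:ℝ) - 1) * (1 - q) / 2 * (2*R) := by rw [hα]; ring
    rw [this, hu]
    field_simp
  have key : -(1 / (1 - q)) * (a * ∫ θ in (0:ℝ)..R, F θ) ^ (1-q)
      ≤ -C * Real.exp (α*(1-q)*R) := by
    have := mul_le_mul_of_nonneg_left hVpow (by positivity : (0:ℝ) ≤ 1/(1-q))
    have heq : 1/(1-q) * (A ^ (1-q) * Real.exp (α*(1-q)*R))
        = C * Real.exp (α*(1-q)*R) := by rw [hC]; field_simp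
    rw [neg_mul, neg_mul]
    linarith
  show -(1 / (1 - q)) * (a * ∫ θ in (0:ℝ)..R, F θ) ^ (1-q) + h (2*R)/2
      ≤ Real.exp (α*(1-q)*R) * (u (2*R)/2 - C)
  rw [hhval]
  have hre : Real.exp (α*(1-q)*R) * (u (2*R)/2 - C)
      = -C * Real.exp (α*(1-q)*R) + u (2*R) * Real.exp (α*(1-q)*R) / 2 := by ring
  rw [hre]
  linarith [key]
end

section
/- Let c : [0,∞) → ℝ be continuous, positive and non-decreasing, and let ψ : [0,∞) → ℝ be twice differentiable with ψ''(θ) = c(θ)·ψ(θ) for θ > 0, ψ(0) = 0, ψ'(0) = 1. Let λ̃ > λ > 0 and let h : [0,∞) → ℝ be a function with liminf_{θ→∞} h(θ)/exp(λ̃·∫₀^θ √(c(t)) dt) > 0. Then liminf_{θ→∞} h(θ)/ψ(θ)^λ > 0. -/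
open Real Filter Set Topology

/-- Implication (6.9) ⇒ (6.12) in Section 6.2: with `ψ'' = c ψ`, `ψ(0)=0`, `ψ'(0)=1`, if
`liminf_{θ→∞} h(θ)/exp(λ̃ ∫₀^θ √c) > 0` (i.e. eventually bounded below by a positive
constant) for some `λ̃ > λ > 0`, then `liminf_{θ→∞} h(θ)/ψ(θ)^λ > 0`. -/
theorem stmt15 (c ψ ψ' : ℝ → ℝ)
    (hc_cont : ContinuousOn c (Set.Ici 0))
    (hc_pos : ∀ θ ≥ (0:ℝ), 0 < c θ)
    (hc_mono : MonotoneOn c (Set.Ici 0))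
    (hψ : ∀ θ ≥ (0:ℝ), HasDerivAt ψ (ψ' θ) θ)
    (hψ'' : ∀ θ > (0:ℝ), HasDerivAt ψ' (c θ * ψ θ) θ)
    (hψ0 : ψ 0 = 0) (hψ'0 : ψ' 0 = 1)
    (lam lamT : ℝ) (hlam : 0 < lam) (hlamT : lam < lamT)
    (h : ℝ → ℝ)
    (hinf : ∃ m : ℝ, 0 < m ∧ ∀ᶠ θ in atTop,
      m ≤ h θ / Real.exp (lamT * ∫ t in (0:ℝ)..θ, Real.sqrt (c t))) :
    ∃ m : ℝ, 0 < m ∧ ∀ᶠ θ in atTop, m ≤ h θ / ψ θ ^ lam := by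
  -- a modified coefficient, continuous on all of ℝ
  set C : ℝ → ℝ := fun t => c (max t 0) with hCdef
  have hCc : Continuous C := by
    have hmax : Continuous fun t : ℝ => max t 0 := continuous_id.max continuous_const
    exact hc_cont.comp_continuous hmax fun t => mem_Ici.2 (le_max_right _ _)
  have hCeq : ∀ t ≥ (0:ℝ), C t = c t := by
    intro t ht; simp [hCdef, max_eq_left ht]
  -- slope fact: arbitrarily close to 0 there are points with ψ' > 1/2
  have slope_fact : ∀ b > (0:ℝ), ∃ a, a ∈ Ioo 0 b ∧ 1/2 < ψ' a := by
    intro b hb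
    have hd0 : HasDerivAt ψ 1 0 := hψ'0 ▸ hψ 0 le_rfl
    have hs : Tendsto (slope ψ 0) (𝓝[≠] 0) (𝓝 1) :=
      hasDerivAt_iff_tendsto_slope.mp hd0
    have hs' : Tendsto (slope ψ 0) (𝓝[>] 0) (𝓝 1) :=
      hs.mono_left (nhdsWithin_mono _ fun x hx => ne_of_gt hx)
    have h1 : ∀ᶠ s in 𝓝[>] (0:ℝ), 1/2 < slope ψ 0 s :=
      hs'.eventually (eventually_gt_nhds (by norm_num))
    have h2 : ∀ᶠ s in 𝓝[>] (0:ℝ), s < b :=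
      Filter.eventually_iff_exists_mem.2 ⟨Ioo 0 b, Ioo_mem_nhdsGT_of_mem ⟨le_rfl, hb⟩,
        fun s hs => hs.2⟩
    obtain ⟨s, ⟨hs1, hs2⟩, hs0⟩ := ((h1.and h2).and eventually_mem_nhdsWithin).exists
    have hs0 : (0:ℝ) < s := hs0
    obtain ⟨ξ, hξ, hξ'⟩ := exists_hasDerivAt_eq_slope ψ ψ' hs0
      (fun x hx => (hψ x hx.1).continuousAt.continuousWithinAt)
      (fun x hx => hψ x hx.1.le)
    refine ⟨ξ, ⟨hξ.1, lt_trans hξ.2 hs2⟩, ?_⟩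
    rw [hξ']
    rw [slope_def_field] at hs1
    simp only [hψ0, sub_zero] at hs1
    simpa [hψ0] using hs1
  have hψcont : ∀ θ ≥ (0:ℝ), ContinuousAt ψ θ := fun θ hθ => (hψ θ hθ).continuousAt
  have hnear : ∀ᶠ s in 𝓝[>] (0:ℝ), 0 < ψ s := by
    have hd0 : HasDerivAt ψ 1 0 := hψ'0 ▸ hψ 0 le_rfl
    have hs' : Tendsto (slope ψ 0) (𝓝[>] 0) (𝓝 1) :=
      (hasDerivAt_iff_tendsto_slope.mp hd0).mono_left
        (nhdsWithin_mono _ fun x hx => ne_of_gt hx)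
    have h1 : ∀ᶠ s in 𝓝[>] (0:ℝ), 0 < slope ψ 0 s :=
      hs'.eventually (eventually_gt_nhds one_pos)
    filter_upwards [h1, eventually_mem_nhdsWithin] with s h1 h0
    rw [slope_def_field, hψ0, sub_zero, sub_zero] at h1
    have h0 : (0:ℝ) < s := h0
    have := mul_pos h1 h0
    rwa [div_mul_cancel₀ _ (ne_of_gt h0)] at this
  obtain ⟨δ, hδ0, hδ⟩ := mem_nhdsGT_iff_exists_Ioo_subset.mp hnear
  have hδ0 : (0:ℝ) < δ := hδ0
  have hψpos : ∀ θ > (0:ℝ), 0 < ψ θ := by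
    intro θ₀ hθ₀
    by_contra hcon
    push_neg at hcon
    set S := {θ : ℝ | 0 < θ ∧ ψ θ ≤ 0} with hSdef
    have hSne : S.Nonempty := ⟨θ₀, hθ₀, hcon⟩
    have hbdd : BddBelow S := ⟨0, fun x hx => hx.1.le⟩
    set τ := sInf S with hτdef
    have hτδ : δ ≤ τ := by
      apply le_csInf hSne
      intro x hx
      by_contra hh
      push_neg at hh
      exact absurd (hδ ⟨hx.1, hh⟩) (not_lt.2 hx.2)
    have hτpos : 0 < τ := lt_of_lt_of_le hδ0 hτδ
    have hψτ : ψ τ ≤ 0 := by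
      obtain ⟨u, -, hu_t, hu_mem⟩ := exists_seq_tendsto_sInf hSne hbdd
      have : Tendsto (fun n => ψ (u n)) atTop (𝓝 (ψ τ)) :=
        (hψcont τ hτpos.le).tendsto.comp hu_t
      exact le_of_tendsto this (Filter.Eventually.of_forall fun n => (hu_mem n).2)
    have hτ_lb : ∀ s, 0 < s → s < τ → 0 < ψ s := by
      intro s hs hsτ
      by_contra hh
      push_neg at hh
      exact absurd (csInf_le hbdd ⟨hs, hh⟩) (not_le.2 hsτ)
    have hmono : StrictMonoOn ψ' (Ioo 0 τ) := by
      apply strictMonoOn_of_deriv_pos (convex_Ioo 0 τ)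
      · exact fun x hx => (hψ'' x hx.1).continuousAt.continuousWithinAt
      · intro x hx
        rw [interior_Ioo] at hx
        rw [(hψ'' x hx.1).deriv]
        exact mul_pos (hc_pos x hx.1.le) (hτ_lb x hx.1 hx.2)
    obtain ⟨ξ, hξ, hξ'⟩ := exists_hasDerivAt_eq_slope ψ ψ' hτpos
      (fun x hx => (hψcont x hx.1).continuousWithinAt)
      (fun x hx => hψ x hx.1.le)
    have hξval : ψ' ξ ≤ 0 := by
      rw [hξ', hψ0, sub_zero, sub_zero]
      exact div_nonpos_of_nonpos_of_nonneg hψτ hτpos.le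
    obtain ⟨η, hη, hη'⟩ := slope_fact ξ hξ.1
    have : ψ' η < ψ' ξ :=
      hmono ⟨hη.1, lt_trans hη.2 hξ.2⟩ hξ hη.2
    linarith
  have hψ'mono : StrictMonoOn ψ' (Ioi 0) := by
    apply strictMonoOn_of_deriv_pos (convex_Ioi 0)
    · exact fun x hx => (hψ'' x hx).continuousAt.continuousWithinAt
    · intro x hx
      rw [interior_Ioi] at hx
      rw [(hψ'' x hx).deriv]
      exact mul_pos (hc_pos x hx.le) (hψpos x hx)
  have hψ'pos : ∀ θ > (0:ℝ), 0 < ψ' θ := by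
    intro θ hθ
    obtain ⟨a, ha, ha'⟩ := slope_fact θ hθ
    have := hψ'mono (mem_Ioi.2 ha.1) (mem_Ioi.2 hθ) ha.2
    linarith
  have hK : 0 < ψ' 1 := hψ'pos 1 one_pos
  have hC1 : 0 < ψ 1 + ψ' 1 := by have := hψpos 1 one_pos; linarith
  -- energy estimate
  have energy : ∀ θ ≥ (1:ℝ), ψ' θ ≤ ψ' 1 + Real.sqrt (c θ) * ψ θ := by
    intro θ hθ1
    have hθ0 : (0:ℝ) < θ := lt_of_lt_of_le one_pos hθ1
    rcases eq_or_lt_of_le hθ1 with rfl | hθ1'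
    · nlinarith [mul_nonneg (Real.sqrt_nonneg (c 1)) (hψpos 1 one_pos).le]
    · have hsub : Icc (1:ℝ) θ ⊆ Ici 0 := fun x hx => le_trans zero_le_one hx.1
      have hcψ : ContinuousOn ψ (Icc 1 θ) :=
        fun x hx => (hψcont x (hsub hx)).continuousWithinAt
      have hcψ' : ContinuousOn ψ' (Icc 1 θ) :=
        fun x hx => (hψ'' x (lt_of_lt_of_le one_pos hx.1)).continuousAt.continuousWithinAt
      have hcc : ContinuousOn c (Icc 1 θ) := hc_cont.mono hsub
      have huIcc : uIcc (1:ℝ) θ = Icc 1 θ := uIcc_of_le hθ1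
      have hint1 : IntervalIntegrable (fun t => c t * ψ t * ψ' t + ψ' t * (c t * ψ t))
          MeasureTheory.volume 1 θ := by
        apply ContinuousOn.intervalIntegrable
        rw [huIcc]
        exact ((hcc.mul hcψ).mul hcψ').add (hcψ'.mul (hcc.mul hcψ))
      have hint2 : IntervalIntegrable (fun t => c θ * (ψ' t * ψ t + ψ t * ψ' t))
          MeasureTheory.volume 1 θ := by
        apply ContinuousOn.intervalIntegrable
        rw [huIcc]
        exact continuousOn_const.mul ((hcψ'.mul hcψ).add (hcψ.mul hcψ'))
      have hint3 : IntervalIntegrable (fun t => ψ' t * ψ t + ψ t * ψ' t)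
          MeasureTheory.volume 1 θ := by
        apply ContinuousOn.intervalIntegrable
        rw [huIcc]
        exact (hcψ'.mul hcψ).add (hcψ.mul hcψ')
      have E1 : (∫ t in (1:ℝ)..θ, (c t * ψ t * ψ' t + ψ' t * (c t * ψ t)))
          = ψ' θ * ψ' θ - ψ' 1 * ψ' 1 := by
        apply intervalIntegral.integral_eq_sub_of_hasDerivAt
        · intro t ht
          rw [huIcc] at ht
          have ht0 : (0:ℝ) < t := lt_of_lt_of_le one_pos ht.1
          exact (hψ'' t ht0).mul (hψ'' t ht0)
        · exact hint1
      have E2 : (∫ t in (1:ℝ)..θ, (ψ' t * ψ t + ψ t * ψ' t))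
          = ψ θ * ψ θ - ψ 1 * ψ 1 := by
        apply intervalIntegral.integral_eq_sub_of_hasDerivAt
        · intro t ht
          rw [huIcc] at ht
          have ht0 : (0:ℝ) ≤ t := le_trans zero_le_one ht.1
          exact (hψ t ht0).mul (hψ t ht0)
        · exact hint3
      have hmono' : (∫ t in (1:ℝ)..θ, (c t * ψ t * ψ' t + ψ' t * (c t * ψ t)))
          ≤ ∫ t in (1:ℝ)..θ, c θ * (ψ' t * ψ t + ψ t * ψ' t) := by
        apply intervalIntegral.integral_mono_on hθ1 hint1 hint2
        intro t ht
        have ht0 : (0:ℝ) < t := lt_of_lt_of_le one_pos ht.1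
        have hct : c t ≤ c θ := hc_mono (hsub ht) (le_of_lt hθ0) ht.2
        have h1 := (hψpos t ht0).le
        have h2 := (hψ'pos t ht0).le
        nlinarith [mul_nonneg h1 h2]
      rw [E1, intervalIntegral.integral_const_mul, E2] at hmono'
      have hsq : Real.sqrt (c θ) * Real.sqrt (c θ) = c θ :=
        Real.mul_self_sqrt (hc_pos θ hθ0.le).le
      have hRnn : 0 ≤ ψ' 1 + Real.sqrt (c θ) * ψ θ := by
        have := mul_nonneg (Real.sqrt_nonneg (c θ)) (hψpos θ hθ0).le
        linarith
      by_contra hcon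
      push_neg at hcon
      nlinarith [hψpos 1 one_pos, (hψ'pos θ hθ0).le, mul_pos (hc_pos θ hθ0.le) (mul_pos (hψpos 1 one_pos) (hψpos 1 one_pos)), mul_nonneg (Real.sqrt_nonneg (c θ)) (hψpos θ hθ0).le, hK.le]
  -- the primitive of sqrt ∘ C
  set I : ℝ → ℝ := fun θ => ∫ t in (0:ℝ)..θ, Real.sqrt (C t) with hIdef
  have hsc : Continuous fun t => Real.sqrt (C t) := Real.continuous_sqrt.comp hCc
  have hI : ∀ θ : ℝ, HasDerivAt I (Real.sqrt (C θ)) θ := by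
    intro θ
    exact intervalIntegral.integral_hasDerivAt_right (hsc.intervalIntegrable 0 θ)
      (hsc.stronglyMeasurable.stronglyMeasurableAtFilter) hsc.continuousAt
  have hIcont : Continuous I := by
    exact continuous_iff_continuousAt.2 fun θ => (hI θ).continuousAt
  have hInn : ∀ θ ≥ (0:ℝ), 0 ≤ I θ := by
    intro θ hθ
    apply intervalIntegral.integral_nonneg hθ
    intro t _; exact Real.sqrt_nonneg _
  have hIeq : ∀ θ ≥ (0:ℝ), (∫ t in (0:ℝ)..θ, Real.sqrt (c t)) = I θ := by
    intro θ hθ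
    apply intervalIntegral.integral_congr
    intro t ht
    rw [uIcc_of_le hθ] at ht
    simp only [hCeq t ht.1]
  have hIlow : ∀ θ ≥ (0:ℝ), Real.sqrt (c 0) * θ ≤ I θ := by
    intro θ hθ
    have hm : (∫ t in (0:ℝ)..θ, Real.sqrt (c 0)) ≤ ∫ t in (0:ℝ)..θ, Real.sqrt (C t) := by
      apply intervalIntegral.integral_mono_on hθ intervalIntegrable_const
        (hsc.intervalIntegrable 0 θ)
      intro t ht
      apply Real.sqrt_le_sqrt
      exact hc_mono (mem_Ici.2 le_rfl) (mem_Ici.2 (le_max_right t 0)) (le_max_right t 0)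
    rwa [intervalIntegral.integral_const, sub_zero, smul_eq_mul, mul_comm] at hm
  -- Grönwall-type bound
  have hψbound : ∀ θ ≥ (1:ℝ), ψ θ ≤ (ψ 1 + ψ' 1) * θ * Real.exp (I θ) := by
    set g : ℝ → ℝ := fun x => ψ' 1 * x - ψ x * Real.exp (-(I x)) with hgdef
    have hgderiv : ∀ x > (0:ℝ), HasDerivAt g
        (ψ' 1 - (ψ' x * Real.exp (-(I x)) + ψ x * (Real.exp (-(I x)) * -(Real.sqrt (C x))))) x := by
      intro x hx
      have h1 : HasDerivAt (fun y : ℝ => ψ' 1 * y) (ψ' 1) x := by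
        simpa using (hasDerivAt_id x).const_mul (ψ' 1)
      have h2 : HasDerivAt (fun y => Real.exp (-(I y))) (Real.exp (-(I x)) * -(Real.sqrt (C x))) x :=
        ((hI x).neg).exp
      exact h1.sub ((hψ x hx.le).mul h2)
    have hgmono : MonotoneOn g (Ici 1) := by
      apply monotoneOn_of_deriv_nonneg (convex_Ici 1)
      · apply ContinuousOn.sub (continuousOn_const.mul continuousOn_id)
        apply ContinuousOn.mul
        · intro x hx
          exact (hψcont x (le_trans zero_le_one hx)).continuousWithinAt
        · exact (Real.continuous_exp.comp hIcont.neg).continuousOn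
      · intro x hx
        rw [interior_Ici] at hx
        exact ((hgderiv x (lt_trans one_pos hx)).differentiableAt).differentiableWithinAt
      · intro x hx
        rw [interior_Ici] at hx
        have hx0 : (0:ℝ) < x := lt_trans one_pos hx
        rw [(hgderiv x hx0).deriv]
        have he1 : Real.exp (-(I x)) ≤ 1 := by
          rw [Real.exp_le_one_iff]
          simpa using hInn x hx0.le
        have he0 : (0:ℝ) < Real.exp (-(I x)) := Real.exp_pos _
        have hen := energy x hx.le
        have hCx : Real.sqrt (C x) = Real.sqrt (c x) := by rw [hCeq x hx0.le]
        rw [hCx]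
        nlinarith [mul_le_mul_of_nonneg_left hen he0.le,
          mul_nonneg (sub_nonneg.2 he1) hK.le]
    intro θ hθ
    have hθ0 : (0:ℝ) < θ := lt_of_lt_of_le one_pos hθ
    have hg1 : g 1 ≤ g θ := hgmono (mem_Ici.2 le_rfl) (mem_Ici.2 hθ) hθ
    have hψ1 : 0 < ψ 1 := hψpos 1 one_pos
    have hE1 : Real.exp (-(I 1)) ≤ 1 := by
      rw [Real.exp_le_one_iff]; simpa using hInn 1 zero_le_one
    have hkey : ψ θ * Real.exp (-(I θ)) ≤ (ψ 1 + ψ' 1) * θ := by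
      simp only [hgdef] at hg1
      nlinarith [mul_pos hψ1 (Real.exp_pos (-(I 1))), mul_le_mul_of_nonneg_left hE1 hψ1.le]
    have := mul_le_mul_of_nonneg_right hkey (Real.exp_pos (I θ)).le
    rwa [mul_assoc, ← Real.exp_add, neg_add_cancel, Real.exp_zero, mul_one] at this
  -- final assembly
  obtain ⟨m, hm, hev⟩ := hinf
  refine ⟨m, hm, ?_⟩
  have hsqrt0 : 0 < Real.sqrt (c 0) := Real.sqrt_pos.2 (hc_pos 0 le_rfl)
  have hε : 0 < (lamT - lam) * Real.sqrt (c 0) := mul_pos (by linarith) hsqrt0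
  have htend := tendsto_exp_mul_div_rpow_atTop lam ((lamT - lam) * Real.sqrt (c 0)) hε
  have hev2 : ∀ᶠ θ : ℝ in atTop,
      (ψ 1 + ψ' 1) ^ lam ≤ Real.exp ((lamT - lam) * Real.sqrt (c 0) * θ) / θ ^ lam :=
    htend.eventually_ge_atTop _
  filter_upwards [hev, hev2, eventually_ge_atTop (1:ℝ)] with θ hhθ hgθ hθ1
  have hθ0 : (0:ℝ) < θ := lt_of_lt_of_le one_pos hθ1
  have hψθ : 0 < ψ θ := hψpos θ hθ0
  rw [le_div_iff₀ (Real.rpow_pos_of_pos hψθ lam)]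
  rw [hIeq θ hθ0.le, le_div_iff₀ (Real.exp_pos _)] at hhθ
  have hθlam : (0:ℝ) < θ ^ lam := Real.rpow_pos_of_pos hθ0 lam
  have hchain : ψ θ ^ lam ≤ Real.exp (lamT * I θ) := by
    calc ψ θ ^ lam ≤ ((ψ 1 + ψ' 1) * θ * Real.exp (I θ)) ^ lam :=
          Real.rpow_le_rpow hψθ.le (hψbound θ hθ1) hlam.le
      _ = (ψ 1 + ψ' 1) ^ lam * θ ^ lam * Real.exp (I θ) ^ lam := by
          rw [Real.mul_rpow (by positivity) (Real.exp_pos _).le,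
            Real.mul_rpow hC1.le hθ0.le]
      _ ≤ Real.exp ((lamT - lam) * I θ) * Real.exp (I θ) ^ lam := by
          apply mul_le_mul_of_nonneg_right _ (Real.rpow_nonneg (Real.exp_pos _).le _)
          have h1 : (ψ 1 + ψ' 1) ^ lam * θ ^ lam
              ≤ Real.exp ((lamT - lam) * Real.sqrt (c 0) * θ) := by
            rw [← le_div_iff₀ hθlam]; exact hgθ
          apply le_trans h1
          rw [Real.exp_le_exp, mul_assoc]
          exact mul_le_mul_of_nonneg_left (hIlow θ hθ0.le) (by linarith)
      _ = Real.exp (lamT * I θ) := by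
          rw [← Real.exp_mul, ← Real.exp_add]
          ring_nf
  calc m * ψ θ ^ lam ≤ m * Real.exp (lamT * I θ) :=
        mul_le_mul_of_nonneg_left hchain hm.le
    _ ≤ h θ := hhθ
end
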